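/- arXiv:0712.2637 — 9 statements merged into one kernel-verified Lean document; each statement's English description precedes it below -/
import Mathlib

section
/- For α ∈ (0,1) and every natural number k ≥ 1, the integral ∫₀¹ (1 - x^{αk}) α x^{α-1}(1-x)^{-α-1} dx is finite and strictly positive. -/
open MeasureTheory Real Set Filter

theorem stmt_3 (α : ℝ) (hα : α ∈ Set.Ioo (0:ℝ) 1) (k : ℕ) (hk : 1 ≤ k) :
    MeasureTheory.IntegrableOn
        (fun x : ℝ => (1 - x ^ (α * k)) * α * x ^ (α - 1) * (1 - x) ^ (-α - 1)) (Set.Ioo 0 1) ∧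
      0 < ∫ x in Set.Ioo (0:ℝ) 1, (1 - x ^ (α * k)) * α * x ^ (α - 1) * (1 - x) ^ (-α - 1) := by
  obtain ⟨hα0, hα1⟩ := hα
  have hk0 : (0:ℝ) < k := by exact_mod_cast hk
  set β : ℝ := α * k with hβdef
  have hβ : 0 < β := mul_pos hα0 hk0
  set f : ℝ → ℝ := fun x => (1 - x ^ β) * α * x ^ (α - 1) * (1 - x) ^ (-α - 1) with hfdef
  -- pointwise positivity
  have hfpos : ∀ x ∈ Ioo (0:ℝ) 1, 0 < f x := by
    intro x hx
    have h1 : x ^ β < 1 := Real.rpow_lt_one hx.1.le hx.2 hβ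
    have h2 : 0 < x ^ (α - 1) := Real.rpow_pos_of_pos hx.1 _
    have h3 : 0 < (1 - x) ^ (-α - 1) := Real.rpow_pos_of_pos (by linarith [hx.2]) _
    have h4 : 0 < 1 - x ^ β := by linarith
    exact mul_pos (mul_pos (mul_pos h4 hα0) h2) h3
  -- measurability
  have hmeas : AEStronglyMeasurable f (volume.restrict (Ioo (0:ℝ) 1)) := by
    apply ContinuousOn.aestronglyMeasurable _ measurableSet_Ioo
    intro x hx
    have hx0 : x ≠ 0 := hx.1.ne'
    have hx1 : (1:ℝ) - x ≠ 0 := by have := hx.2; intro h; nlinarith [sub_eq_zero.mp h]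
    apply ContinuousAt.continuousWithinAt
    have c1 : ContinuousAt (fun x : ℝ => x ^ β) x :=
      Real.continuousAt_rpow_const x β (Or.inl hx0)
    have c2 : ContinuousAt (fun x : ℝ => x ^ (α - 1)) x :=
      Real.continuousAt_rpow_const x _ (Or.inl hx0)
    have c3 : ContinuousAt (fun x : ℝ => (1 - x) ^ (-α - 1)) x :=
      (Real.continuousAt_rpow_const (1 - x) _ (Or.inl hx1)).comp
        ((continuous_const.sub continuous_id).continuousAt)
    exact (((continuousAt_const.sub c1).mul continuousAt_const).mul c2).mul c3
  -- integrability of the dominating function x^(α-1) * (1-x)^(-α)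
  have hint1 : IntegrableOn (fun x : ℝ => x ^ (α - 1)) (Ioc (0:ℝ) (1/2)) := by
    rw [← intervalIntegrable_iff_integrableOn_Ioc_of_le (by norm_num)]
    exact intervalIntegral.intervalIntegrable_rpow' (by linarith)
  have hint2 : IntegrableOn (fun x : ℝ => (1 - x) ^ (-α)) (Ioo (1/2:ℝ) 1) := by
    apply IntegrableOn.mono_set _ Ioo_subset_Ioc_self
    rw [← intervalIntegrable_iff_integrableOn_Ioc_of_le (by norm_num)]
    have h := (intervalIntegral.intervalIntegrable_rpow'
      (r := -α) (by linarith) (a := 0) (b := 1/2)).comp_sub_left 1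
    norm_num at h
    exact h.symm
  have hg1 : IntegrableOn (fun x : ℝ => x ^ (α - 1) * (1 - x) ^ (-α)) (Ioc (0:ℝ) (1/2)) := by
    apply Integrable.mono' (hint1.const_mul ((1/2:ℝ) ^ (-α)))
    · apply ContinuousOn.aestronglyMeasurable _ measurableSet_Ioc
      intro x hx
      have hx0 : x ≠ 0 := hx.1.ne'
      have hx1 : (1:ℝ) - x ≠ 0 := by have := hx.2; intro h; nlinarith [sub_eq_zero.mp h]
      apply ContinuousAt.continuousWithinAt
      exact (Real.continuousAt_rpow_const x _ (Or.inl hx0)).mul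
        ((Real.continuousAt_rpow_const (1 - x) _ (Or.inl hx1)).comp
          ((continuous_const.sub continuous_id).continuousAt))
    · rw [ae_restrict_iff' measurableSet_Ioc]
      filter_upwards with x hx
      have hx0 : 0 < x := hx.1
      have hxh : (1/2:ℝ) ≤ 1 - x := by linarith [hx.2]
      have hb : (1 - x) ^ (-α) ≤ (1/2:ℝ) ^ (-α) :=
        Real.rpow_le_rpow_of_nonpos (by norm_num) hxh (by linarith)
      have h2 : 0 ≤ x ^ (α - 1) := Real.rpow_nonneg hx0.le _
      have h3 : 0 ≤ (1 - x) ^ (-α) := Real.rpow_nonneg (by linarith) _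
      rw [Real.norm_eq_abs, abs_of_nonneg (mul_nonneg h2 h3), mul_comm ((1/2:ℝ) ^ (-α))]
      exact mul_le_mul_of_nonneg_left hb h2
  have hg2 : IntegrableOn (fun x : ℝ => x ^ (α - 1) * (1 - x) ^ (-α)) (Ioo (1/2:ℝ) 1) := by
    apply Integrable.mono' (hint2.const_mul ((1/2:ℝ) ^ (α - 1)))
    · apply ContinuousOn.aestronglyMeasurable _ measurableSet_Ioo
      intro x hx
      have hx0 : x ≠ 0 := by have := hx.1; intro h; rw [h] at this; norm_num at this
      have hx1 : (1:ℝ) - x ≠ 0 := by have := hx.2; intro h; nlinarith [sub_eq_zero.mp h]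
      apply ContinuousAt.continuousWithinAt
      exact (Real.continuousAt_rpow_const x _ (Or.inl hx0)).mul
        ((Real.continuousAt_rpow_const (1 - x) _ (Or.inl hx1)).comp
          ((continuous_const.sub continuous_id).continuousAt))
    · rw [ae_restrict_iff' measurableSet_Ioo]
      filter_upwards with x hx
      have hx0 : (0:ℝ) < x := lt_trans (by norm_num) hx.1
      have hb : x ^ (α - 1) ≤ (1/2:ℝ) ^ (α - 1) :=
        Real.rpow_le_rpow_of_nonpos (by norm_num) hx.1.le (by linarith)
      have h2 : 0 ≤ x ^ (α - 1) := Real.rpow_nonneg hx0.le _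
      have h3 : 0 ≤ (1 - x) ^ (-α) := Real.rpow_nonneg (by linarith [hx.2.le]) _
      rw [Real.norm_eq_abs, abs_of_nonneg (mul_nonneg h2 h3), mul_comm ((1/2:ℝ) ^ (α - 1))]
      rw [mul_comm (x ^ (α - 1))]
      exact mul_le_mul_of_nonneg_left hb h3
  have hsub : Ioo (0:ℝ) 1 ⊆ Ioc (0:ℝ) (1/2) ∪ Ioo (1/2:ℝ) 1 := by
    intro x hx
    rcases le_or_gt x (1/2) with h | h
    · exact Or.inl ⟨hx.1, h⟩
    · exact Or.inr ⟨h, hx.2⟩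
  have hg : IntegrableOn (fun x : ℝ => x ^ (α - 1) * (1 - x) ^ (-α)) (Ioo (0:ℝ) 1) :=
    (hg1.union hg2).mono_set hsub
  -- key pointwise bound
  have hkey : ∀ x ∈ Ioo (0:ℝ) 1, 1 - x ^ β ≤ max β 1 * (1 - x) := by
    intro x hx
    have h1x : (0:ℝ) < 1 - x := by linarith [hx.2]
    rcases le_total β 1 with hβ1 | hβ1
    · have : x ^ (1:ℝ) ≤ x ^ β :=
        Real.rpow_le_rpow_of_exponent_ge hx.1 hx.2.le hβ1
      rw [Real.rpow_one] at this
      have hm : (1:ℝ) ≤ max β 1 := le_max_right _ _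
      nlinarith
    · have hb := one_add_mul_self_le_rpow_one_add (s := x - 1) (by linarith [hx.1]) hβ1
      rw [show (1:ℝ) + (x - 1) = x by ring] at hb
      have hm : β ≤ max β 1 := le_max_left _ _
      nlinarith
  have hint : IntegrableOn f (Ioo (0:ℝ) 1) := by
    apply Integrable.mono' (hg.const_mul (max β 1 * α)) hmeas
    rw [ae_restrict_iff' measurableSet_Ioo]
    filter_upwards with x hx
    have h1x : (0:ℝ) < 1 - x := by linarith [hx.2]
    have e : (1 - x) ^ (-α) = (1 - x) * (1 - x) ^ (-α - 1) := by
      have e0 := Real.rpow_add h1x 1 (-α - 1)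
      rw [Real.rpow_one, show (1:ℝ) + (-α - 1) = -α by ring] at e0
      exact e0
    have h2 : 0 ≤ x ^ (α - 1) := Real.rpow_nonneg hx.1.le _
    have h3 : 0 ≤ (1 - x) ^ (-α - 1) := Real.rpow_nonneg h1x.le _
    rw [Real.norm_eq_abs, abs_of_nonneg (hfpos x hx).le]
    calc (1 - x ^ β) * α * x ^ (α - 1) * (1 - x) ^ (-α - 1)
        = (1 - x ^ β) * (α * x ^ (α - 1) * (1 - x) ^ (-α - 1)) := by ring
      _ ≤ (max β 1 * (1 - x)) * (α * x ^ (α - 1) * (1 - x) ^ (-α - 1)) :=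
          mul_le_mul_of_nonneg_right (hkey x hx)
            (mul_nonneg (mul_nonneg hα0.le h2) h3)
      _ = max β 1 * α * (x ^ (α - 1) * ((1 - x) * (1 - x) ^ (-α - 1))) := by ring
      _ = max β 1 * α * (x ^ (α - 1) * (1 - x) ^ (-α)) := by rw [← e]
  refine ⟨hint, ?_⟩
  have h0le : 0 ≤ᵐ[volume.restrict (Ioo (0:ℝ) 1)] f := by
    filter_upwards [ae_restrict_mem measurableSet_Ioo] with x hx
    exact (hfpos x hx).le
  rw [setIntegral_pos_iff_support_of_nonneg_ae h0le hint]
  have hss : Ioo (0:ℝ) 1 ⊆ Function.support f := fun x hx => (hfpos x hx).ne'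
  rw [Set.inter_eq_self_of_subset_right hss]
  rw [Real.volume_Ioo]
  norm_num
end

section
/- For α ∈ (0,1) and any y ∈ (0,1) and any measurable function g : ℝ → ℝ with |g(x)| ≤ M|x|, one has ∫_ℝ g(x) K(y; dx) = (1-y)^{-α} ∫₀¹ g(x(1-y)) (1-x)^{α-1} α x^{-α-1} dx, and consequently ∫_ℝ |x| K(y; dx) ≤ α B(α, 1-α), uniformly in y ∈ (0,1). -/
open MeasureTheory Real Set Filter

lemma aux_cov (α : ℝ) (g : ℝ → ℝ) (c : ℝ) (hc : 0 < c) :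
    (∫ x in Set.Ioo (0:ℝ) c, g x * ((1 - x / c) ^ (α - 1) * (α * x ^ (-α - 1))))
      = c ^ (-α) *
          ∫ x in Set.Ioo (0:ℝ) 1, g (x * c) * ((1 - x) ^ (α - 1) * (α * x ^ (-α - 1))) := by
  set F : ℝ → ℝ := fun x => g x * ((1 - x / c) ^ (α - 1) * (α * x ^ (-α - 1))) with hF
  have e1 : (∫ x in Set.Ioo (0:ℝ) c, F x) = ∫ x in (0:ℝ)..c, F x := by
    rw [intervalIntegral.integral_of_le hc.le, MeasureTheory.integral_Ioc_eq_integral_Ioo]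
  have e2 : (∫ u in (0:ℝ)..1, F (u * c)) = c⁻¹ • ∫ x in (0:ℝ)..c, F x := by
    have := intervalIntegral.integral_comp_mul_right F (ne_of_gt hc) (a := 0) (b := 1)
    simpa using this
  have e3 : (∫ u in (0:ℝ)..1, F (u * c)) = ∫ u in Set.Ioo (0:ℝ) 1, F (u * c) := by
    rw [intervalIntegral.integral_of_le (by norm_num : (0:ℝ) ≤ 1),
      MeasureTheory.integral_Ioc_eq_integral_Ioo]
  have e4 : (∫ u in Set.Ioo (0:ℝ) 1, F (u * c))
      = (∫ u in Set.Ioo (0:ℝ) 1, g (u * c) * ((1 - u) ^ (α - 1) * (α * u ^ (-α - 1))))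
          * c ^ (-α - 1) := by
    rw [← MeasureTheory.integral_mul_const]
    apply MeasureTheory.setIntegral_congr_fun measurableSet_Ioo
    intro u hu
    have h1 : u * c / c = u := by field_simp
    have h2 : (u * c) ^ (-α - 1) = u ^ (-α - 1) * c ^ (-α - 1) :=
      Real.mul_rpow hu.1.le hc.le
    simp only [hF, h1, h2]
    ring
  have hc1 : c * c ^ (-α - 1) = c ^ (-α) := by
    nth_rewrite 1 [← Real.rpow_one c]
    rw [← Real.rpow_add hc]
    norm_num
  calc (∫ x in Set.Ioo (0:ℝ) c, F x)
      = c • (c⁻¹ • ∫ x in (0:ℝ)..c, F x) := by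
        rw [smul_smul, mul_inv_cancel₀ (ne_of_gt hc), one_smul, e1]
    _ = c • ∫ u in (0:ℝ)..1, F (u * c) := by rw [e2]
    _ = c ^ (-α) * ∫ x in Set.Ioo (0:ℝ) 1, g (x * c) * ((1 - x) ^ (α - 1) * (α * x ^ (-α - 1))) := by
        rw [e3, e4, smul_eq_mul, ← hc1]; ring

theorem stmt_5 (α M : ℝ) (hα : α ∈ Set.Ioo (0:ℝ) 1) (hM : 0 < M)
    (g : ℝ → ℝ) (hg : Measurable g) (hgb : ∀ x, |g x| ≤ M * |x|)
    (y : ℝ) (hy : y ∈ Set.Ioo (0:ℝ) 1) :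
    (∫ x in Set.Ioo (0:ℝ) (1 - y), g x * ((1 - x / (1 - y)) ^ (α - 1) * (α * x ^ (-α - 1))))
        = (1 - y) ^ (-α) *
            ∫ x in Set.Ioo (0:ℝ) 1, g (x * (1 - y)) * ((1 - x) ^ (α - 1) * (α * x ^ (-α - 1)))
      ∧ (∫ x in Set.Ioo (0:ℝ) (1 - y), |x| * ((1 - x / (1 - y)) ^ (α - 1) * (α * x ^ (-α - 1))))
          ≤ α * ∫ v in Set.Ioo (0:ℝ) 1, v ^ (α - 1) * (1 - v) ^ ((1 - α) - 1) := by
  obtain ⟨hy0, hy1⟩ := hy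
  obtain ⟨hα0, hα1⟩ := hα
  have hc : 0 < 1 - y := by linarith
  constructor
  · exact aux_cov α g (1 - y) hc
  · set c := 1 - y with hcdef
    have h1 := aux_cov α (fun x => |x|) c hc
    rw [h1]
    -- simplify the inner integral
    set J : ℝ := ∫ v in Set.Ioo (0:ℝ) 1, v ^ (α - 1) * (1 - v) ^ ((1 - α) - 1) with hJ
    have e5 : (∫ u in Set.Ioo (0:ℝ) 1, |u * c| * ((1 - u) ^ (α - 1) * (α * u ^ (-α - 1))))
        = (∫ u in Set.Ioo (0:ℝ) 1, u ^ (-α) * (1 - u) ^ (α - 1)) * (c * α) := by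
      rw [← MeasureTheory.integral_mul_const]
      apply MeasureTheory.setIntegral_congr_fun measurableSet_Ioo
      intro u hu
      have habs : |u * c| = u * c := abs_of_pos (mul_pos hu.1 hc)
      dsimp only
      have h2 : u * u ^ (-α - 1) = u ^ (-α) := by
        nth_rewrite 1 [← Real.rpow_one u]
        rw [← Real.rpow_add hu.1]
        norm_num
      rw [habs]
      calc u * c * ((1 - u) ^ (α - 1) * (α * u ^ (-α - 1)))
          = (u * u ^ (-α - 1)) * (1 - u) ^ (α - 1) * (c * α) := by ring
        _ = u ^ (-α) * (1 - u) ^ (α - 1) * (c * α) := by rw [h2]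
    have e6 : (∫ u in Set.Ioo (0:ℝ) 1, u ^ (-α) * (1 - u) ^ (α - 1)) = J := by
      have key : (∫ u in (0:ℝ)..1, u ^ (-α) * (1 - u) ^ (α - 1))
          = ∫ v in (0:ℝ)..1, v ^ (α - 1) * (1 - v) ^ ((1 - α) - 1) := by
        have := intervalIntegral.integral_comp_sub_left
          (fun v => v ^ (α - 1) * (1 - v) ^ ((1 - α) - 1)) 1 (a := 0) (b := 1)
        simp only [sub_zero, sub_self] at this
        rw [← this]
        apply intervalIntegral.integral_congr
        intro u hu
        have : (1:ℝ) - α - 1 = -α := by ring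
        rw [this]
        ring_nf
      have l1 : (∫ u in Set.Ioo (0:ℝ) 1, u ^ (-α) * (1 - u) ^ (α - 1))
          = ∫ u in (0:ℝ)..1, u ^ (-α) * (1 - u) ^ (α - 1) := by
        rw [intervalIntegral.integral_of_le (by norm_num : (0:ℝ) ≤ 1),
          MeasureTheory.integral_Ioc_eq_integral_Ioo]
      have l2 : J = ∫ v in (0:ℝ)..1, v ^ (α - 1) * (1 - v) ^ ((1 - α) - 1) := by
        rw [hJ, intervalIntegral.integral_of_le (by norm_num : (0:ℝ) ≤ 1),
          MeasureTheory.integral_Ioc_eq_integral_Ioo]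
      rw [l1, l2, key]
    rw [e5, e6]
    have hJ0 : 0 ≤ J := by
      apply MeasureTheory.setIntegral_nonneg measurableSet_Ioo
      intro v hv
      exact mul_nonneg (Real.rpow_nonneg hv.1.le _) (Real.rpow_nonneg (by linarith [hv.2]) _)
    have hpow : c ^ (-α) * c = c ^ (1 - α) := by
      nth_rewrite 2 [← Real.rpow_one c]
      rw [← Real.rpow_add hc]
      ring_nf
    have hle1 : c ^ (1 - α) ≤ 1 :=
      Real.rpow_le_one hc.le (by linarith) (by linarith)
    calc c ^ (-α) * (J * (c * α)) = c ^ (1 - α) * (α * J) := by rw [← hpow]; ring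
      _ ≤ 1 * (α * J) := by
          apply mul_le_mul_of_nonneg_right hle1 (mul_nonneg hα0.le hJ0)
      _ = α * J := one_mul _
end

section
/- For α ∈ (0,1), the map y ↦ ∫_ℝ g(x) K(y; dx) is continuous on ℝ for every continuous g : ℝ → ℝ satisfying |g(x)| ≤ M|x| for some M > 0. -/
open MeasureTheory Real Set Filter

lemma beta_int {α : ℝ} (hα : α ∈ Set.Ioo (0:ℝ) 1) :
    IntegrableOn (fun u : ℝ => u ^ (-α) * (1-u) ^ (α-1)) (Set.Ioo (0:ℝ) 1) := by
  obtain ⟨h0, h1⟩ := hα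
  have hmeas : Measurable (fun u : ℝ => u ^ (-α) * (1-u) ^ (α-1)) := by fun_prop
  have hL : IntegrableOn (fun u : ℝ => u ^ (-α) * (1-u) ^ (α-1)) (Set.Ioc (0:ℝ) (1/2)) := by
    have h1' : IntegrableOn (fun u : ℝ => u ^ (-α)) (Set.Ioc (0:ℝ) (1/2)) := by
      have := intervalIntegral.intervalIntegrable_rpow' (a := (0:ℝ)) (b := 1/2) (r := -α)
        (by linarith)
      rwa [intervalIntegrable_iff_integrableOn_Ioc_of_le (by norm_num)] at this
    refine (h1'.mul_const ((1/2 : ℝ) ^ (α-1))).mono hmeas.aestronglyMeasurable.restrict ?_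
    filter_upwards [ae_restrict_mem measurableSet_Ioc] with u hu
    rw [Real.norm_eq_abs, Real.norm_eq_abs, abs_mul, abs_mul,
      abs_of_nonneg (Real.rpow_nonneg hu.1.le _),
      abs_of_nonneg (Real.rpow_nonneg (by norm_num : (0:ℝ) ≤ (1:ℝ)/2) _),
      abs_of_nonneg (Real.rpow_nonneg (by linarith [hu.2] : (0:ℝ) ≤ 1 - u) _)]
    exact mul_le_mul_of_nonneg_left
      (Real.rpow_le_rpow_of_nonpos (by norm_num) (by linarith [hu.2]) (by linarith))
      (Real.rpow_nonneg hu.1.le _)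
  have hR : IntegrableOn (fun u : ℝ => u ^ (-α) * (1-u) ^ (α-1)) (Set.Ioc ((1:ℝ)/2) 1) := by
    have h1' : IntegrableOn (fun u : ℝ => (1-u) ^ (α-1)) (Set.Ioc ((1:ℝ)/2) 1) := by
      have hbase := intervalIntegral.intervalIntegrable_rpow' (a := (0:ℝ)) (b := 1/2) (r := α-1)
        (by linarith)
      have h2 := (hbase.comp_sub_left 1).symm
      rw [show (1:ℝ) - 0 = 1 by norm_num, show (1:ℝ) - 1/2 = 1/2 by norm_num] at h2
      rwa [intervalIntegrable_iff_integrableOn_Ioc_of_le (by norm_num)] at h2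
    refine (h1'.const_mul (((1:ℝ)/2) ^ (-α))).mono hmeas.aestronglyMeasurable.restrict ?_
    filter_upwards [ae_restrict_mem measurableSet_Ioc] with u hu
    rw [Real.norm_eq_abs, Real.norm_eq_abs, abs_mul, abs_mul,
      abs_of_nonneg (Real.rpow_nonneg (by linarith [hu.1] : (0:ℝ) ≤ u) _),
      abs_of_nonneg (Real.rpow_nonneg (by norm_num : (0:ℝ) ≤ (1:ℝ)/2) _),
      abs_of_nonneg (Real.rpow_nonneg (by linarith [hu.2] : (0:ℝ) ≤ 1 - u) _)]
    exact mul_le_mul_of_nonneg_right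
      (Real.rpow_le_rpow_of_nonpos (by norm_num) (by linarith [hu.1]) (by linarith))
      (Real.rpow_nonneg (by linarith [hu.2]) _)
  have : IntegrableOn (fun u : ℝ => u ^ (-α) * (1-u) ^ (α-1))
      (Set.Ioc (0:ℝ) (1/2) ∪ Set.Ioc ((1:ℝ)/2) 1) := hL.union hR
  refine this.mono_set ?_
  rw [Set.Ioc_union_Ioc_eq_Ioc (by norm_num) (by norm_num)]
  exact Set.Ioo_subset_Ioc_self

lemma subst_lemma {α : ℝ} (g : ℝ → ℝ) {y : ℝ} (hy : y < 1) :
    ∫ x in Set.Ioo (0:ℝ) (1-y), g x * ((1 - x / (1 - y)) ^ (α - 1) * (α * x ^ (-α - 1)))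
      = ∫ u in Set.Ioo (0:ℝ) 1,
        g ((1-y)*u) * ((1-u) ^ (α-1) * (α * (u ^ (-α-1) * (1-y) ^ (-α)))) := by
  set c := 1 - y with hcdef
  have hc : 0 < c := by simp [hcdef]; linarith
  rw [← integral_Ioc_eq_integral_Ioo, ← intervalIntegral.integral_of_le hc.le,
      ← integral_Ioc_eq_integral_Ioo, ← intervalIntegral.integral_of_le (by norm_num : (0:ℝ) ≤ 1)]
  have key := intervalIntegral.smul_integral_comp_mul_left
    (f := fun x => g x * ((1 - x / c) ^ (α - 1) * (α * x ^ (-α - 1)))) (a := (0:ℝ)) (b := 1) c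
  rw [mul_zero, mul_one] at key
  rw [← key, ← intervalIntegral.integral_smul]
  apply intervalIntegral.integral_congr
  intro u hu
  rw [Set.uIcc_of_le (by norm_num : (0:ℝ) ≤ 1)] at hu
  have h2 : c * c ^ (-α-1) = c ^ (-α) := by
    calc c * c ^ (-α-1) = c ^ (1:ℝ) * c ^ (-α-1) := by rw [Real.rpow_one]
      _ = c ^ ((1:ℝ) + (-α-1)) := (Real.rpow_add hc _ _).symm
      _ = c ^ (-α) := by norm_num
  simp only [smul_eq_mul]
  rw [mul_div_cancel_left₀ u (ne_of_gt hc), Real.mul_rpow hc.le hu.1, ← h2]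
  ring

lemma key_bound {α M : ℝ} (hα : α ∈ Set.Ioo (0:ℝ) 1) (g : ℝ → ℝ)
    (hgb : ∀ x, |g x| ≤ M * |x|) {t u : ℝ} (ht : 0 ≤ t) (hu : u ∈ Set.Ioo (0:ℝ) 1) :
    |g (t*u) * ((1-u) ^ (α-1) * (α * (u ^ (-α-1) * t ^ (-α))))|
      ≤ M * (t ^ (1-α) * (α * (u ^ (-α) * (1-u) ^ (α-1)))) := by
  obtain ⟨h0, h1⟩ := hα
  obtain ⟨hu0, hu1⟩ := hu
  have hP : (0:ℝ) ≤ (1-u) ^ (α-1) * (α * (u ^ (-α-1) * t ^ (-α))) := mul_nonneg (Real.rpow_nonneg (by linarith) _)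
    (mul_nonneg h0.le (mul_nonneg (Real.rpow_nonneg hu0.le _) (Real.rpow_nonneg ht _)))
  have huu : u * u ^ (-α-1) = u ^ (-α) := by
    calc u * u ^ (-α-1) = u ^ (1:ℝ) * u ^ (-α-1) := by rw [Real.rpow_one]
      _ = u ^ ((1:ℝ) + (-α-1)) := (Real.rpow_add hu0 _ _).symm
      _ = u ^ (-α) := by norm_num
  have htt : t * t ^ (-α) = t ^ (1-α) := by
    rcases eq_or_lt_of_le ht with h | h
    · rw [← h, Real.zero_rpow (by linarith : (1:ℝ)-α ≠ 0), zero_mul]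
    · calc t * t ^ (-α) = t ^ (1:ℝ) * t ^ (-α) := by rw [Real.rpow_one]
        _ = t ^ ((1:ℝ) + -α) := (Real.rpow_add h _ _).symm
        _ = t ^ (1-α) := by rw [show (1:ℝ) + -α = 1-α by ring]
  calc |g (t*u) * ((1-u) ^ (α-1) * (α * (u ^ (-α-1) * t ^ (-α))))|
      = |g (t*u)| * ((1-u) ^ (α-1) * (α * (u ^ (-α-1) * t ^ (-α)))) := by
        rw [abs_mul, abs_of_nonneg hP]
    _ ≤ (M * (t*u)) * ((1-u) ^ (α-1) * (α * (u ^ (-α-1) * t ^ (-α)))) := by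
        refine mul_le_mul_of_nonneg_right ?_ hP
        have := hgb (t*u)
        rwa [abs_of_nonneg (mul_nonneg ht hu0.le)] at this
    _ = M * (t ^ (1-α) * (α * (u ^ (-α) * (1-u) ^ (α-1)))) := by
        rw [← huu, ← htt]; ring

theorem stmt_6 (α M : ℝ) (hα : α ∈ Set.Ioo (0:ℝ) 1) (hM : 0 < M)
    (g : ℝ → ℝ) (hg : Continuous g) (hgb : ∀ x, |g x| ≤ M * |x|)
    (I : ℝ → ℝ)
    (hI : ∀ y, I y = if y < 1 then
        ∫ x in Set.Ioo (0:ℝ) (1 - y), g x * ((1 - x / (1 - y)) ^ (α - 1) * (α * x ^ (-α - 1)))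
      else 0) :
    Continuous I := by
  obtain ⟨h0, h1⟩ := hα
  set t : ℝ → ℝ := fun y => max (1-y) 0 with htdef
  have ht : Continuous t := (continuous_const.sub continuous_id).max continuous_const
  set F : ℝ → ℝ → ℝ := fun y u =>
    g (t y * u) * ((1-u) ^ (α-1) * (α * (u ^ (-α-1) * (t y) ^ (-α)))) with hFdef
  have ht0 : ∀ y, 0 ≤ t y := fun y => le_max_right _ _
  -- pointwise bound with t y replaced
  have hkey : ∀ y, ∀ u ∈ Set.Ioo (0:ℝ) 1,
      |F y u| ≤ M * ((t y) ^ (1-α) * (α * (u ^ (-α) * (1-u) ^ (α-1)))) := fun y u hu =>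
    key_bound ⟨h0, h1⟩ g hgb (ht0 y) hu
  have hIJ : ∀ y, I y = ∫ u in Set.Ioo (0:ℝ) 1, F y u := by
    intro y
    rw [hI]
    by_cases hy : y < 1
    · rw [if_pos hy, subst_lemma g hy]
      have : t y = 1 - y := max_eq_left (by linarith)
      simp only [hFdef, this]
    · rw [if_neg hy]
      have hty : t y = 0 := max_eq_right (by push_neg at hy; linarith)
      have : ∀ u, F y u = 0 := by
        intro u
        simp only [hFdef, hty, Real.zero_rpow (by linarith : -α ≠ 0), mul_zero, zero_mul]
      simp only [this, integral_zero]
  have : Continuous fun y => ∫ u in Set.Ioo (0:ℝ) 1, F y u := by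
    rw [continuous_iff_continuousAt]
    intro y₀
    set C : ℝ := |1 - y₀| + 1 with hCdef
    have hC : 0 < C := by positivity
    apply continuousAt_of_dominated
      (bound := fun u => M * (C ^ (1-α) * (α * (u ^ (-α) * (1-u) ^ (α-1)))))
    · filter_upwards with y
      apply Measurable.aestronglyMeasurable
      have hgm : Measurable g := hg.measurable
      fun_prop
    · filter_upwards [Metric.ball_mem_nhds y₀ one_pos] with y hy
      filter_upwards [ae_restrict_mem measurableSet_Ioo] with u hu
      rw [Real.norm_eq_abs]
      refine (hkey y u hu).trans ?_
      have htyC : t y ≤ C := by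
        have := abs_sub_abs_le_abs_sub (1-y) (1-y₀)
        have hdist : |y - y₀| < 1 := by simpa [Real.dist_eq] using hy
        have h1y : 1 - y ≤ C := by
          have : |1-y| ≤ |1-y₀| + |(1-y) - (1-y₀)| := by
            have := abs_sub (1-y) (1-y₀); nlinarith [abs_sub_abs_le_abs_sub (1-y) (1-y₀), le_abs_self (1-y)]
          have h2 : |(1-y) - (1-y₀)| = |y - y₀| := by rw [show (1-y) - (1-y₀) = -(y - y₀) by ring, abs_neg]
          calc 1 - y ≤ |1-y| := le_abs_self _
            _ ≤ |1-y₀| + |(1-y)-(1-y₀)| := this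
            _ ≤ |1-y₀| + 1 := by rw [h2]; linarith
        exact max_le h1y hC.le
      have hrw : (t y) ^ (1-α) ≤ C ^ (1-α) := Real.rpow_le_rpow (ht0 y) htyC (by linarith)
      have hX : (0:ℝ) ≤ α * (u ^ (-α) * (1-u) ^ (α-1)) :=
        mul_nonneg h0.le (mul_nonneg (Real.rpow_nonneg hu.1.le _) (Real.rpow_nonneg (by linarith [hu.2]) _))
      exact mul_le_mul_of_nonneg_left (mul_le_mul_of_nonneg_right hrw hX) hM.le
    · refine (((beta_int ⟨h0, h1⟩).const_mul α).const_mul (C ^ (1-α))).const_mul M |>.congr ?_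
      filter_upwards with u
      ring
    · filter_upwards [ae_restrict_mem measurableSet_Ioo] with u hu
      by_cases hy₀ : y₀ < 1
      · have hty₀ : 0 < t y₀ := by
          simp only [htdef]; rw [max_eq_left (by linarith)]; linarith
        have h1 : ContinuousAt (fun y => (t y) ^ (-α)) y₀ :=
          (Real.continuousAt_rpow_const _ _ (Or.inl (ne_of_gt hty₀))).comp ht.continuousAt
        exact ((hg.comp (ht.mul continuous_const)).continuousAt).mul
          (continuousAt_const.mul (continuousAt_const.mul ((continuousAt_const.mul h1))))
      · -- y₀ ≥ 1 : squeeze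
        have hty₀ : t y₀ = 0 := max_eq_right (by push_neg at hy₀; linarith)
        have hF0 : F y₀ u = 0 := by
          simp only [hFdef, hty₀, Real.zero_rpow (by linarith : -α ≠ 0), mul_zero, zero_mul]
        have hbcont : Continuous fun y => M * ((t y) ^ (1-α) * (α * (u ^ (-α) * (1-u) ^ (α-1)))) := by
          refine continuous_const.mul (Continuous.mul ?_ continuous_const)
          rw [continuous_iff_continuousAt]
          intro y
          exact (Real.continuousAt_rpow_const _ _ (Or.inr (by linarith))).comp ht.continuousAt
        have hb0 : M * ((t y₀) ^ (1-α) * (α * (u ^ (-α) * (1-u) ^ (α-1)))) = 0 := by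
          rw [hty₀, Real.zero_rpow (by linarith : (1:ℝ)-α ≠ 0)]; ring
        have hbt : Tendsto (fun y => M * ((t y) ^ (1-α) * (α * (u ^ (-α) * (1-u) ^ (α-1)))))
            (nhds y₀) (nhds 0) := by
          have := hbcont.continuousAt (x := y₀)
          rwa [ContinuousAt, hb0] at this
        have : Tendsto (fun y => F y u) (nhds y₀) (nhds 0) :=
          squeeze_zero_norm (fun y => by rw [Real.norm_eq_abs]; exact hkey y u hu) hbt
        rw [ContinuousAt, hF0]
        exact this
  rw [show I = fun y => ∫ u in Set.Ioo (0:ℝ) 1, F y u from funext hIJ]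
  exact this
end

section
/- Let L : (0,∞) → (0,∞) be slowly varying at infinity. Then for every ε > 0 there exists x₀ > 0 such that L(x)/L(y) ≤ (1+ε) · (max(x/y, y/x))^{ε} for all x ≥ x₀ and y ≥ x₀. (Potter's bounds.) -/
open MeasureTheory Real Set Filter

-- Step lemma: chaining unit steps
lemma potter_chain (h : ℝ → ℝ) {T δ : ℝ} (hδ : 0 ≤ δ)
    (hu : ∀ t ≥ T, ∀ u ∈ Icc (0:ℝ) 1, |h (t + u) - h t| ≤ δ) :
    ∀ n : ℕ, ∀ s t : ℝ, T ≤ t → t ≤ s → s ≤ t + n → |h s - h t| ≤ δ * n := by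
  intro n
  induction n with
  | zero =>
    intro s t hT hts hst
    have : s = t := le_antisymm (by simpa using hst) hts
    simp [this]
  | succ n ih =>
    intro s t hT hts hst
    push_cast
    by_cases hc : s ≤ t + n
    · calc |h s - h t| ≤ δ * n := ih s t hT hts hc
        _ ≤ δ * ((n:ℝ)+1) := by nlinarith [Nat.cast_nonneg (α := ℝ) n]
    · push_neg at hc
      have h1 : |h s - h (t + n)| ≤ δ := by
        have := hu (t + n) (by linarith [Nat.cast_nonneg (α := ℝ) n]) (s - (t+n))
          ⟨by linarith, by push_cast at hst ⊢; linarith⟩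
        simpa using this
      have h2 : |h (t + n) - h t| ≤ δ * n := ih (t+n) t hT (by linarith [Nat.cast_nonneg (α := ℝ) n]) le_rfl
      calc |h s - h t| ≤ |h s - h (t+n)| + |h (t+n) - h t| := abs_sub_le _ _ _
        _ ≤ δ + δ * n := by linarith
        _ = δ * ((n:ℝ)+1) := by ring

lemma potter_unif (h : ℝ → ℝ) (hm : Measurable h)
    (hconv : ∀ u : ℝ, Tendsto (fun t => h (t + u) - h t) atTop (nhds 0))
    {δ : ℝ} (hδ : 0 < δ) :
    ∃ T : ℝ, ∀ t ≥ T, ∀ u ∈ Icc (0:ℝ) 1, |h (t + u) - h t| ≤ δ := by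
  by_contra hcon
  push_neg at hcon
  choose t ht u hu hbad using hcon
  -- sequences indexed by ℕ
  set tn : ℕ → ℝ := fun n => t n with htn
  set un : ℕ → ℝ := fun n => u n with hun
  have htn_top : Tendsto tn atTop atTop :=
    tendsto_atTop_mono (fun n => ht n) tendsto_natCast_atTop_atTop
  have hun01 : ∀ n, un n ∈ Icc (0:ℝ) 1 := fun n => hu n
  have htun_top : Tendsto (fun n => tn n + un n) atTop atTop :=
    tendsto_atTop_mono (fun n => le_add_of_nonneg_right (hun01 n).1) htn_top
  -- the good sets
  set G : ℕ → Set ℝ := fun n =>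
    Icc (0:ℝ) 2 ∩ ⋂ m, ⋂ (_ : n ≤ m),
      ((fun v => |h (tn m + v) - h (tn m)|) ⁻¹' Iic (δ/3) ∩
       (fun v => |h (tn m + un m + v) - h (tn m + un m)|) ⁻¹' Iic (δ/3)) with hG
  have hGmeas : ∀ n, MeasurableSet (G n) := by
    intro n
    refine measurableSet_Icc.inter (MeasurableSet.iInter fun m => MeasurableSet.iInter fun _ => ?_)
    exact ((((hm.comp (measurable_const_add _)).sub measurable_const).abs) measurableSet_Iic).inter
      ((((hm.comp (measurable_const_add _)).sub measurable_const).abs) measurableSet_Iic)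
  have hGmono : Monotone G := by
    intro a b hab
    refine inter_subset_inter_right _ ?_
    intro v hv
    simp only [mem_iInter] at hv ⊢
    intro m hm'
    exact hv m (hab.trans hm')
  have hGunion : ⋃ n, G n = Icc (0:ℝ) 2 := by
    apply subset_antisymm
    · exact iUnion_subset fun n => inter_subset_left
    · intro v hv
      have h1 : Tendsto (fun m => h (tn m + v) - h (tn m)) atTop (nhds 0) :=
        (hconv v).comp htn_top
      have h2 : Tendsto (fun m => h (tn m + un m + v) - h (tn m + un m)) atTop (nhds 0) :=
        (hconv v).comp htun_top
      have hδ3 : (0:ℝ) < δ/3 := by linarith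
      have e1 : ∀ᶠ m in atTop, |h (tn m + v) - h (tn m)| ≤ δ/3 := by
        have := h1.abs; rw [abs_zero] at this
        exact this.eventually_le_const hδ3
      have e2 : ∀ᶠ m in atTop, |h (tn m + un m + v) - h (tn m + un m)| ≤ δ/3 := by
        have := h2.abs; rw [abs_zero] at this
        exact this.eventually_le_const hδ3
      obtain ⟨n, hn⟩ := (e1.and e2).exists_forall_of_atTop
      refine mem_iUnion.2 ⟨n, hv, ?_⟩
      simp only [mem_iInter, mem_inter_iff, mem_preimage, mem_Iic]
      intro m hm'
      exact hn m hm'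
  -- measure of G n tends to 2
  have hvol : Tendsto (fun n => volume (G n)) atTop (nhds (volume (Icc (0:ℝ) 2))) := by
    have := tendsto_measure_iUnion_atTop (μ := volume) hGmono
    rwa [hGunion] at this
  have hlt : ENNReal.ofReal (3/2) < volume (Icc (0:ℝ) 2) := by
    rw [Real.volume_Icc]
    exact ENNReal.ofReal_lt_ofReal_iff (by norm_num) |>.2 (by norm_num)
  obtain ⟨n, hn⟩ := (hvol.eventually_const_lt hlt).exists
  -- translate
  set B : Set ℝ := (fun v => v + (-un n)) ⁻¹' G n with hB
  have hBmeas : MeasurableSet B := (hGmeas n).preimage (measurable_add_const _)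
  have hBvol : volume B = volume (G n) := measure_preimage_add_right _ _ _
  have hsub : G n ∪ B ⊆ Icc (0:ℝ) 3 := by
    rintro v (hv | hv)
    · exact Icc_subset_Icc_right (by norm_num) hv.1
    · have h1 := hv.1
      have := hun01 n
      simp only [mem_Icc] at h1 this ⊢
      constructor <;> linarith [h1.1, h1.2, this.1, this.2]
  have hinter : (G n ∩ B).Nonempty := by
    rw [nonempty_iff_ne_empty]
    intro hempty
    have hkey := measure_union_add_inter (μ := volume) (G n) hBmeas
    rw [hempty, measure_empty, add_zero] at hkey
    have hle : volume (G n ∪ B) ≤ ENNReal.ofReal 3 := by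
      calc volume (G n ∪ B) ≤ volume (Icc (0:ℝ) 3) := measure_mono hsub
        _ = ENNReal.ofReal 3 := by rw [Real.volume_Icc]; norm_num
    rw [hBvol] at hkey
    have : ENNReal.ofReal (3/2) + ENNReal.ofReal (3/2) < volume (G n) + volume (G n) :=
      ENNReal.add_lt_add hn hn
    rw [← ENNReal.ofReal_add (by norm_num) (by norm_num)] at this
    norm_num at this
    rw [← hkey] at this
    have h3 : volume (G n ∪ B) ≤ 3 := by simpa using hle
    exact absurd (this.trans_le h3) (lt_irrefl _)
  obtain ⟨v, hvG, hvB⟩ := hinter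
  -- derive contradiction
  have hv1 : |h (tn n + v) - h (tn n)| ≤ δ/3 := by
    have := hvG.2
    simp only [mem_iInter, mem_inter_iff, mem_preimage, mem_Iic] at this
    exact (this n le_rfl).1
  have hw : v + (-un n) ∈ G n := hvB
  have hv2 : |h (tn n + un n + (v + (-un n))) - h (tn n + un n)| ≤ δ/3 := by
    have := hw.2
    simp only [mem_iInter, mem_inter_iff, mem_preimage, mem_Iic] at this
    exact (this n le_rfl).2
  have heq : tn n + un n + (v + (-un n)) = tn n + v := by ring
  rw [heq] at hv2
  have : |h (tn n + un n) - h (tn n)| ≤ 2*δ/3 := by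
    calc |h (tn n + un n) - h (tn n)|
        ≤ |h (tn n + un n) - h (tn n + v)| + |h (tn n + v) - h (tn n)| := abs_sub_le _ _ _
      _ ≤ δ/3 + δ/3 := by
          rw [abs_sub_comm]
          exact add_le_add hv2 hv1
      _ = 2*δ/3 := by ring
  have hbadn := hbad n
  linarith [hbadn]

theorem stmt_7 (L : ℝ → ℝ) (hLm : Measurable L) (hLpos : ∀ x > (0:ℝ), 0 < L x)
    (hsv : ∀ l : ℝ, 0 < l → Filter.Tendsto (fun x => L (l * x) / L x) Filter.atTop (nhds 1)) :
    ∀ ε > (0:ℝ), ∃ x₀ > (0:ℝ), ∀ x ≥ x₀, ∀ y ≥ x₀,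
      L x / L y ≤ (1 + ε) * (max (x / y) (y / x)) ^ ε := by
  intro ε hε
  set h : ℝ → ℝ := fun t => Real.log (L (Real.exp t)) with hh
  have hm : Measurable h := Real.measurable_log.comp (hLm.comp Real.measurable_exp)
  have hLexp : ∀ t : ℝ, 0 < L (Real.exp t) := fun t => hLpos _ (Real.exp_pos t)
  have hexph : ∀ t : ℝ, Real.exp (h t) = L (Real.exp t) := fun t =>
    Real.exp_log (hLexp t)
  have hconv : ∀ u : ℝ, Tendsto (fun t => h (t + u) - h t) atTop (nhds 0) := by
    intro u
    have h1 : Tendsto (fun t : ℝ => L (Real.exp u * Real.exp t) / L (Real.exp t))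
        atTop (nhds 1) := (hsv (Real.exp u) (Real.exp_pos u)).comp Real.tendsto_exp_atTop
    have h2 : Tendsto (fun t : ℝ => Real.log (L (Real.exp u * Real.exp t) / L (Real.exp t)))
        atTop (nhds 0) := by
      have := (Real.continuousAt_log one_ne_zero).tendsto.comp h1
      simpa [Real.log_one, Function.comp_def] using this
    refine h2.congr fun t => ?_
    rw [Real.log_div (ne_of_gt (by rw [← Real.exp_add]; exact hLexp _)) (ne_of_gt (hLexp t))]
    rw [← Real.exp_add, add_comm u t]
  set δ : ℝ := min ε (Real.log (1 + ε)) with hδdef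
  have hδ : 0 < δ := lt_min hε (Real.log_pos (by linarith))
  obtain ⟨T, hT⟩ := potter_unif h hm hconv hδ
  have hchain := potter_chain h hδ.le hT
  -- key two-sided estimate
  have hkey : ∀ s t : ℝ, T ≤ s → T ≤ t → |h s - h t| ≤ δ * (|s - t| + 1) := by
    have base : ∀ s t : ℝ, T ≤ t → t ≤ s → |h s - h t| ≤ δ * (|s - t| + 1) := by
      intro s t hTt hts
      have h1 : s ≤ t + ⌈s - t⌉₊ := by
        have := Nat.le_ceil (s - t); linarith
      have h2 := hchain ⌈s - t⌉₊ s t hTt hts h1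
      have h3 : (⌈s - t⌉₊ : ℝ) ≤ (s - t) + 1 := by
        have := Nat.ceil_lt_add_one (by linarith : (0:ℝ) ≤ s - t)
        linarith
      have habs : |s - t| = s - t := abs_of_nonneg (by linarith)
      calc |h s - h t| ≤ δ * ⌈s - t⌉₊ := h2
        _ ≤ δ * (|s - t| + 1) := by rw [habs]; nlinarith
    intro s t hs ht
    rcases le_total t s with hc | hc
    · exact base s t ht hc
    · rw [abs_sub_comm, abs_sub_comm s t]; exact base t s hs hc
  refine ⟨Real.exp T, Real.exp_pos T, ?_⟩
  intro x hx y hy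
  have hx0 : 0 < x := lt_of_lt_of_le (Real.exp_pos T) hx
  have hy0 : 0 < y := lt_of_lt_of_le (Real.exp_pos T) hy
  set s := Real.log x with hs
  set t := Real.log y with ht'
  have hTs : T ≤ s := by
    rw [hs, ← Real.log_exp T]; exact Real.log_le_log (Real.exp_pos T) hx
  have hTt : T ≤ t := by
    rw [ht', ← Real.log_exp T]; exact Real.log_le_log (Real.exp_pos T) hy
  have hLx : L x = Real.exp (h s) := by rw [hexph, hs, Real.exp_log hx0]
  have hLy : L y = Real.exp (h t) := by rw [hexph, ht', Real.exp_log hy0]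
  have hmax : max (x / y) (y / x) = Real.exp |s - t| := by
    rcases le_total y x with hc | hc
    · have h1 : y / x ≤ x / y := by
        rw [div_le_div_iff₀ hx0 hy0]; nlinarith
      rw [max_eq_left h1, abs_of_nonneg (by rw [hs, ht']; exact sub_nonneg.2 (Real.log_le_log hy0 hc))]
      rw [Real.exp_sub, hs, ht', Real.exp_log hx0, Real.exp_log hy0]
    · have h1 : x / y ≤ y / x := by
        rw [div_le_div_iff₀ hy0 hx0]; nlinarith
      rw [max_eq_right h1, abs_of_nonpos (by rw [hs, ht']; exact sub_nonpos.2 (Real.log_le_log hx0 hc))]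
      rw [neg_sub, Real.exp_sub, hs, ht', Real.exp_log hx0, Real.exp_log hy0]
  have hrpow : (max (x / y) (y / x)) ^ ε = Real.exp (ε * |s - t|) := by
    rw [hmax, Real.rpow_def_of_pos (Real.exp_pos _), Real.log_exp, mul_comm]
  have hexp1 : h s - h t ≤ Real.log (1 + ε) + ε * |s - t| := by
    have h1 := hkey s t hTs hTt
    have h2 : h s - h t ≤ |h s - h t| := le_abs_self _
    have h3 : δ ≤ ε := min_le_left _ _
    have h4 : δ ≤ Real.log (1 + ε) := min_le_right _ _
    have h5 : (0:ℝ) ≤ |s - t| := abs_nonneg _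
    nlinarith
  calc L x / L y = Real.exp (h s - h t) := by rw [hLx, hLy, Real.exp_sub]
    _ ≤ Real.exp (Real.log (1 + ε) + ε * |s - t|) := Real.exp_le_exp.2 hexp1
    _ = (1 + ε) * Real.exp (ε * |s - t|) := by
        rw [Real.exp_add, Real.exp_log (by linarith)]
    _ = (1 + ε) * (max (x / y) (y / x)) ^ ε := by rw [hrpow]
end

section
/- Let F be a cumulative distribution function on ℝ whose right tail 1 - F(x) is regularly varying at infinity with index -α, where α ∈ (0,1). Then limsup over r→∞ and A→∞ of sup_{y ∈ [A/r, 1]} y(1 - F(ry))/(1 - F(r)) is at most 1; precisely, for every ε > 0 there exist A₀ and r₀ such that for all A ≥ A₀ and r ≥ r₀ with A/r ≤ 1, sup_{y ∈ [A/r,1]} y(1-F(ry))/(1-F(r)) ≤ 1 + ε. -/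
open MeasureTheory Real Set Filter

theorem stmt_8 (α : ℝ) (hα : α ∈ Set.Ioo (0:ℝ) 1) (F : ℝ → ℝ) (hFm : Monotone F)
    (hF1 : ∀ x, F x < 1)
    (hrv : ∀ l : ℝ, 0 < l →
      Filter.Tendsto (fun x => (1 - F (l * x)) / (1 - F x)) Filter.atTop (nhds (l ^ (-α)))) :
    ∀ ε > (0:ℝ), ∃ A₀ > (0:ℝ), ∃ r₀ > (0:ℝ), ∀ A ≥ A₀, ∀ r ≥ r₀, A / r ≤ 1 →
      ∀ y ∈ Set.Icc (A / r) 1, y * (1 - F (r * y)) / (1 - F r) ≤ 1 + ε := by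
  obtain ⟨hα0, hα1⟩ := hα
  intro ε hε
  have hFpos : ∀ x, 0 < 1 - F x := fun x => by linarith [hF1 x]
  set s := Real.sqrt (1 + ε) with hs
  have hspos : 0 < s := Real.sqrt_pos.mpr (by linarith)
  have hs1 : 1 < s := by
    have : Real.sqrt 1 < Real.sqrt (1 + ε) := Real.sqrt_lt_sqrt (by norm_num) (by linarith)
    simpa using this
  have hs2 : s * s = 1 + ε := Real.mul_self_sqrt (by linarith)
  have hsε : s < 1 + ε := by nlinarith
  set θ := s ^ (1/α) with hθ
  have hθpos : 0 < θ := Real.rpow_pos_of_pos hspos _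
  have hθ1 : 1 < θ := (Real.one_lt_rpow_iff_of_pos hspos).mpr (Or.inl ⟨hs1, by positivity⟩)
  have hθα : θ ^ α = s := by
    rw [hθ, ← Real.rpow_mul (le_of_lt hspos), one_div_mul_cancel (ne_of_gt hα0), Real.rpow_one]
  have hsθ : s < θ := by
    have h1α : 1 < 1/α := (one_lt_div hα0).mpr hα1
    calc s = s ^ (1:ℝ) := (Real.rpow_one s).symm
    _ < s ^ (1/α) := Real.rpow_lt_rpow_of_exponent_lt hs1 h1α
  set c := min θ (1 + ε) with hc
  have hcpos : 0 < c := lt_min hθpos (by linarith)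
  have hsc : s < c := lt_min hsθ hsε
  have hcθ : c ≤ θ := min_le_left _ _
  have hcε : c ≤ 1 + ε := min_le_right _ _
  -- limit of ratio with l = θ⁻¹ is θ^α = s
  have hlim : Filter.Tendsto (fun x => (1 - F (θ⁻¹ * x)) / (1 - F x)) Filter.atTop (nhds s) := by
    have := hrv θ⁻¹ (by positivity)
    have heq : (θ⁻¹ : ℝ) ^ (-α) = s := by
      rw [Real.inv_rpow hθpos.le, Real.rpow_neg hθpos.le, inv_inv, hθα]
    rwa [heq] at this
  have hev : ∀ᶠ x in Filter.atTop, (1 - F (θ⁻¹ * x)) / (1 - F x) < c :=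
    hlim.eventually_lt_const hsc
  obtain ⟨R, hR⟩ := Filter.eventually_atTop.mp hev
  set R₁ := max R 1 with hR₁
  have hR₁pos : (0:ℝ) < R₁ := lt_of_lt_of_le one_pos (le_max_right _ _)
  have hc' : ∀ x, R₁ ≤ x → 1 - F (θ⁻¹ * x) ≤ c * (1 - F x) := by
    intro x hx
    have := hR x (le_trans (le_max_left _ _) hx)
    rw [div_lt_iff₀ (hFpos x)] at this
    linarith
  -- key chaining lemma
  have key : ∀ k : ℕ, ∀ x : ℝ, R₁ ≤ θ⁻¹ ^ k * x →
      1 - F (θ⁻¹ ^ (k+1) * x) ≤ c ^ (k+1) * (1 - F x) := by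
    intro k
    induction k with
    | zero =>
      intro x hx
      simp only [pow_zero, one_mul] at hx
      simpa [pow_one] using hc' x hx
    | succ n ih =>
      intro x hx
      have hxpos : 0 < x := by
        by_contra h
        push_neg at h
        have h2 : θ⁻¹ ^ (n+1) * x ≤ 0 :=
          mul_nonpos_of_nonneg_of_nonpos (by positivity) h
        linarith
      have hx' : R₁ ≤ θ⁻¹ ^ n * x := by
        refine le_trans hx ?_
        apply mul_le_mul_of_nonneg_right _ (le_of_lt hxpos)
        exact pow_le_pow_of_le_one (by positivity)
          (by rw [inv_le_one_iff₀]; right; exact le_of_lt hθ1) (Nat.le_succ n)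
      have h1 : 1 - F (θ⁻¹ * (θ⁻¹ ^ (n+1) * x)) ≤ c * (1 - F (θ⁻¹ ^ (n+1) * x)) :=
        hc' _ hx
      have h2 := ih x hx'
      calc 1 - F (θ⁻¹ ^ (n+1+1) * x) = 1 - F (θ⁻¹ * (θ⁻¹ ^ (n+1) * x)) := by ring_nf
      _ ≤ c * (1 - F (θ⁻¹ ^ (n+1) * x)) := h1
      _ ≤ c * (c ^ (n+1) * (1 - F x)) :=
          mul_le_mul_of_nonneg_left h2 (le_of_lt hcpos)
      _ = c ^ (n+1+1) * (1 - F x) := by ring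
  refine ⟨R₁, hR₁pos, 1, one_pos, ?_⟩
  intro A hA r hr hAr y hy
  obtain ⟨hy1, hy2⟩ := hy
  have hrpos : (0:ℝ) < r := lt_of_lt_of_le one_pos hr
  have hApos : (0:ℝ) < A := lt_of_lt_of_le hR₁pos hA
  have hy0 : 0 < y := lt_of_lt_of_le (by positivity) hy1
  have hinv1 : θ⁻¹ < 1 := by rw [inv_lt_one_iff₀]; right; exact hθ1
  obtain ⟨n, hn⟩ := exists_pow_lt_of_lt_one hy0 hinv1
  have hP : ∃ m, θ⁻¹ ^ m < y := ⟨n, hn⟩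
  have hm0 : Nat.find hP ≠ 0 := by
    intro h
    have := Nat.find_spec hP
    rw [h, pow_zero] at this
    linarith
  obtain ⟨k, hk⟩ : ∃ k, Nat.find hP = k + 1 :=
    ⟨Nat.find hP - 1, (Nat.succ_pred_eq_of_pos (Nat.pos_of_ne_zero hm0)).symm⟩
  have hk1 : θ⁻¹ ^ (k+1) ≤ y := by
    have := Nat.find_spec hP
    rw [hk] at this
    linarith
  have hk2 : y ≤ θ⁻¹ ^ k :=
    le_of_not_gt (Nat.find_min hP (by omega))
  -- apply key lemma at x = r
  have hkr : R₁ ≤ θ⁻¹ ^ k * r := by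
    have h1 : A / r ≤ θ⁻¹ ^ k := le_trans hy1 hk2
    have h2 : A ≤ θ⁻¹ ^ k * r := by
      rw [div_le_iff₀ hrpos] at h1
      linarith
    linarith
  have hkey := key k r hkr
  -- monotonicity: F (θ⁻¹^(k+1) * r) ≤ F (r * y)
  have hmono : 1 - F (r * y) ≤ 1 - F (θ⁻¹ ^ (k+1) * r) := by
    have : θ⁻¹ ^ (k+1) * r ≤ r * y := by
      rw [mul_comm r y]
      exact mul_le_mul_of_nonneg_right hk1 (le_of_lt hrpos)
    linarith [hFm this]
  -- geometric bound: θ⁻¹^k * c^(k+1) ≤ 1 + ε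
  have hgeo : θ⁻¹ ^ k * c ^ (k+1) ≤ 1 + ε := by
    have h1 : θ⁻¹ ^ k * c ^ k ≤ 1 := by
      rw [← mul_pow]
      apply pow_le_one₀ (by positivity)
      calc θ⁻¹ * c ≤ θ⁻¹ * θ := mul_le_mul_of_nonneg_left hcθ (by positivity)
      _ = 1 := inv_mul_cancel₀ (ne_of_gt hθpos)
    calc θ⁻¹ ^ k * c ^ (k+1) = (θ⁻¹ ^ k * c ^ k) * c := by ring
    _ ≤ 1 * c := mul_le_mul_of_nonneg_right h1 (le_of_lt hcpos)
    _ ≤ 1 + ε := by linarith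
  -- finish
  rw [div_le_iff₀ (hFpos r)]
  calc y * (1 - F (r * y)) ≤ θ⁻¹ ^ k * (1 - F (θ⁻¹ ^ (k+1) * r)) := by
        apply mul_le_mul hk2 hmono (le_of_lt (hFpos _)) (by positivity)
  _ ≤ θ⁻¹ ^ k * (c ^ (k+1) * (1 - F r)) :=
        mul_le_mul_of_nonneg_left hkey (by positivity)
  _ = (θ⁻¹ ^ k * c ^ (k+1)) * (1 - F r) := by ring
  _ ≤ (1 + ε) * (1 - F r) := mul_le_mul_of_nonneg_right hgeo (le_of_lt (hFpos r))
end

section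
/- Let F be a cumulative distribution function whose right tail 1 - F(x) is regularly varying at infinity with index -α, α ∈ (0,1). Then for every y ∈ (0,1], limsup_{r→∞} (1 - F(r))^{-1} ∫_{(0,y]} x dF_r(x) ≤ y^{1-α}/(1-α), where F_r(x) = F(rx) is the rescaled distribution (so ∫_{(0,y]} x dF_r(x) = ∫_{(0,ry]} (u/r) dF(u)). -/
open MeasureTheory Real Set Filter Topology

-- existence of suitable kappa
lemma aux_kappa {α : ℝ} (hα : α ∈ Set.Ioo (0:ℝ) 1) :
    ∃ κ : ℝ, 1 < κ ∧ (1-α)*κ + 1 ≤ (2-α)*κ^(1-α) := by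
  obtain ⟨hα0, hα1⟩ := hα
  set χ : ℝ → ℝ := fun k => (2-α)*k^(1-α) - ((1-α)*k + 1) with hχ
  have hd : HasDerivAt χ ((1-α)^2) 1 := by
    have h1 : HasDerivAt (fun k : ℝ => k^(1-α)) ((1-α) * (1:ℝ)^(1-α-1)) 1 :=
      Real.hasDerivAt_rpow_const (Or.inl one_ne_zero)
    have h2 : HasDerivAt (fun k : ℝ => (2-α)*k^(1-α)) ((2-α) * ((1-α) * (1:ℝ)^(1-α-1))) 1 :=
      h1.const_mul _
    have h3 : HasDerivAt (fun k : ℝ => (1-α)*k + 1) (1-α) 1 := by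
      simpa using ((hasDerivAt_id (1:ℝ)).const_mul (1-α)).add_const 1
    have := h2.sub h3
    refine this.congr_deriv ?_
    rw [Real.one_rpow]
    ring
  have hslope := hasDerivAt_iff_tendsto_slope.1 hd
  have hpos : (0:ℝ) < (1-α)^2 := pow_pos (by linarith) 2
  have h4 : ∀ᶠ k in 𝓝[≠] (1:ℝ), 0 < slope χ 1 k :=
    hslope.eventually (eventually_gt_nhds hpos)
  have h5 : ∀ᶠ k in 𝓝[>] (1:ℝ), 0 < slope χ 1 k :=
    nhdsWithin_mono 1 (fun x hx => ne_of_gt hx) h4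
  obtain ⟨k, hk1, hk2⟩ := (h5.and self_mem_nhdsWithin).exists
  refine ⟨k, hk2, ?_⟩
  have hχ1 : χ 1 = 0 := by simp [hχ]; ring
  have hk1' : 0 < k - 1 := sub_pos.2 hk2
  rw [slope_def_field, hχ1, sub_zero] at hk1
  have hck : 0 < χ k := by
    have := mul_pos hk1 hk1'
    rwa [div_mul_cancel₀ _ (ne_of_gt hk1')] at this
  simp only [hχ] at hck
  linarith

lemma aux_int (f : StieltjesFunction ℝ) (c : ℝ) :
    IntegrableOn (fun u => u) (Ioc 0 c) f.measure := by
  have hfin : f.measure (Ioc 0 c) < ⊤ := by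
    rw [f.measure_Ioc]; exact ENNReal.ofReal_lt_top
  refine Integrable.mono' (g := fun _ => |c|) ?_ ?_ ?_
  · exact integrableOn_const hfin.ne
  · exact aestronglyMeasurable_id
  · refine (ae_restrict_iff' measurableSet_Ioc).2 (ae_of_all _ fun x hx => ?_)
    rw [Real.norm_eq_abs, abs_le]
    constructor
    · calc -|c| ≤ 0 := neg_nonpos.2 (abs_nonneg c)
        _ ≤ x := le_of_lt hx.1
    · exact le_trans hx.2 (le_abs_self c)

lemma aux_bound (f : StieltjesFunction ℝ) {a b : ℝ} (ha : 0 ≤ a) (hab : a ≤ b) :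
    ∫ u in Ioc a b, u ∂f.measure ≤ b * (f b - f a) := by
  have hsub : Ioc a b ⊆ Ioc 0 b := Ioc_subset_Ioc ha le_rfl
  have hint : IntegrableOn (fun u => u) (Ioc a b) f.measure :=
    (aux_int f b).mono_set hsub
  have hc : IntegrableOn (fun _ => b) (Ioc a b) f.measure := by
    refine integrableOn_const ?_
    rw [f.measure_Ioc]
    exact ENNReal.ofReal_ne_top
  have h := setIntegral_mono_on hint hc measurableSet_Ioc (fun x hx => hx.2)
  rw [setIntegral_const] at h
  refine h.trans ?_
  rw [measureReal_def, f.measure_Ioc, ENNReal.toReal_ofReal (sub_nonneg.2 (f.mono hab))]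
  rw [smul_eq_mul, mul_comm]

lemma aux_nonneg (f : StieltjesFunction ℝ) {a b : ℝ} (ha : 0 ≤ a) :
    0 ≤ ∫ u in Ioc a b, u ∂f.measure := by
  refine setIntegral_nonneg measurableSet_Ioc (fun x hx => ?_)
  exact le_of_lt (lt_of_le_of_lt ha hx.1)

lemma aux_split (f : StieltjesFunction ℝ) {a b c : ℝ} (ha : 0 ≤ a) (hab : a ≤ b) (hbc : b ≤ c) :
    ∫ u in Ioc a c, u ∂f.measure
      = (∫ u in Ioc a b, u ∂f.measure) + ∫ u in Ioc b c, u ∂f.measure := by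
  have h1 : IntegrableOn (fun u : ℝ => u) (Ioc a b) f.measure :=
    (aux_int f b).mono_set (Ioc_subset_Ioc ha le_rfl)
  have h2 : IntegrableOn (fun u : ℝ => u) (Ioc b c) f.measure :=
    (aux_int f c).mono_set (Ioc_subset_Ioc (ha.trans hab) le_rfl)
  rw [← Set.Ioc_union_Ioc_eq_Ioc hab hbc]
  exact setIntegral_union (Set.Ioc_disjoint_Ioc_of_le le_rfl) measurableSet_Ioc h1 h2


lemma aux_geo_split (f : StieltjesFunction ℝ) {q b : ℝ} (hq0 : 0 < q) (hq1 : q < 1)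
    (hb : 0 < b) (N : ℕ) :
    ∫ u in Ioc 0 b, u ∂f.measure ≤
      (∫ u in Ioc 0 (b*q^N), u ∂f.measure)
        + ∑ j ∈ Finset.range N, b*q^j * (f (b*q^j) - f (b*q^(j+1))) := by
  induction N with
  | zero => simp
  | succ N ih =>
    have hqN : b * q^(N+1) ≤ b * q^N := by
      have : q^(N+1) ≤ q^N := pow_le_pow_of_le_one hq0.le hq1.le (Nat.le_succ N)
      exact mul_le_mul_of_nonneg_left this hb.le
    have h0 : (0:ℝ) ≤ b * q^(N+1) := by positivity
    have hsplit := aux_split f (le_refl 0) h0 hqN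
    have hbd : ∫ u in Ioc (b*q^(N+1)) (b*q^N), u ∂f.measure
        ≤ b*q^N * (f (b*q^N) - f (b*q^(N+1))) := aux_bound f h0 hqN
    rw [Finset.sum_range_succ]
    calc ∫ u in Ioc 0 b, u ∂f.measure
        ≤ (∫ u in Ioc 0 (b*q^N), u ∂f.measure)
            + ∑ j ∈ Finset.range N, b*q^j * (f (b*q^j) - f (b*q^(j+1))) := ih
      _ ≤ _ := by rw [hsplit]; linarith

lemma aux_chain (f : StieltjesFunction ℝ) {q ρ x0 c : ℝ} (hq0 : 0 < q) (hq1 : q < 1)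
    (hρ1 : 1 ≤ ρ) (hx0 : ∀ x, x0 ≤ x → 1 - f (x*q) ≤ ρ * (1 - f x)) (hc : 0 < c)
    (hT : ∀ x, 0 ≤ 1 - f x) :
    ∀ j : ℕ, x0 ≤ c*q^j → 1 - f (c*q^j) ≤ ρ^j * (1 - f c) := by
  intro j
  induction j with
  | zero => intro _; simp
  | succ j ih =>
    intro hj1
    have hj : x0 ≤ c * q^j := by
      refine hj1.trans (mul_le_mul_of_nonneg_left ?_ hc.le)
      exact pow_le_pow_of_le_one hq0.le hq1.le (Nat.le_succ j)
    have h1 : 1 - f ((c*q^j)*q) ≤ ρ * (1 - f (c*q^j)) := hx0 _ hj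
    have h2 : ρ * (1 - f (c*q^j)) ≤ ρ * (ρ^j * (1 - f c)) :=
      mul_le_mul_of_nonneg_left (ih hj) (by linarith)
    calc 1 - f (c*q^(j+1)) = 1 - f ((c*q^j)*q) := by rw [mul_assoc, ← pow_succ]
      _ ≤ ρ * (ρ^j * (1 - f c)) := h1.trans h2
      _ = ρ^(j+1) * (1 - f c) := by ring

lemma aux_N {κ x0 : ℝ} (hκ : 1 < κ) (hx0 : 0 < x0) {z : ℝ} (hz : x0 ≤ z) :
    ∃ N : ℕ, x0 ≤ z * (κ⁻¹)^N ∧ z * (κ⁻¹)^N < x0 * κ ∧ ∀ m : ℕ, x0 * κ^m ≤ z → m ≤ N := by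
  have hκ0 : (0:ℝ) < κ := lt_trans one_pos hκ
  have hS : ∃ k : ℕ, z < x0 * κ^k := by
    obtain ⟨k, hk⟩ := pow_unbounded_of_one_lt (z/x0) hκ
    exact ⟨k, by rwa [div_lt_iff₀ hx0, mul_comm] at hk⟩
  classical
  set k := Nat.find hS with hkdef
  have hk : z < x0 * κ^k := Nat.find_spec hS
  have hk0 : k ≠ 0 := by
    intro h
    rw [h] at hk; simp at hk; linarith
  obtain ⟨N, hN⟩ : ∃ N, k = N + 1 := ⟨k - 1, (Nat.succ_pred_eq_of_pos (Nat.pos_of_ne_zero hk0)).symm⟩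
  have hNlt : ¬ (z < x0 * κ^N) := Nat.find_min hS (by omega)
  push_neg at hNlt
  have hκN : (0:ℝ) < κ^N := pow_pos hκ0 N
  refine ⟨N, ?_, ?_, ?_⟩
  · rw [inv_pow, ← div_eq_mul_inv, le_div_iff₀ hκN]
    exact hNlt
  · rw [inv_pow, ← div_eq_mul_inv, div_lt_iff₀ hκN]
    calc z < x0 * κ^(N+1) := by rw [← hN]; exact hk
      _ = x0 * κ * κ^N := by ring
  · intro m hm
    by_contra h
    push_neg at h
    have hkm : k ≤ m := by omega
    have : x0 * κ^k ≤ x0 * κ^m :=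
      mul_le_mul_of_nonneg_left (pow_le_pow_right₀ hκ.le hkm) hx0.le
    linarith


lemma aux_top (f : StieltjesFunction ℝ) {κ ρ x0 : ℝ} (hκ : 1 < κ) (hρ1 : 1 ≤ ρ) (hρκ : ρ < κ)
    (hx0p : 0 < x0) (hT : ∀ x, 0 < 1 - f x)
    (hx0 : ∀ x, x0 ≤ x → 1 - f (x*κ⁻¹) ≤ ρ * (1 - f x)) :
    Tendsto (fun r => r * (1 - f r)) atTop atTop := by
  have hκ0 : (0:ℝ) < κ := lt_trans one_pos hκ
  have hρ0 : (0:ℝ) < ρ := lt_of_lt_of_le one_pos hρ1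
  have hq0 : (0:ℝ) < κ⁻¹ := inv_pos.2 hκ0
  have hq1 : κ⁻¹ < 1 := inv_lt_one_of_one_lt₀ hκ
  have hbase : 1 < κ/ρ := (one_lt_div hρ0).2 hρκ
  set c1 := x0 * (1 - f (x0*κ)) with hc1
  have hc1p : 0 < c1 := mul_pos hx0p (hT _)
  rw [tendsto_atTop]
  intro M
  obtain ⟨m, hm⟩ : ∃ m : ℕ, M ≤ c1 * (κ/ρ)^m := by
    obtain ⟨m, hm⟩ := pow_unbounded_of_one_lt (M/c1) hbase
    exact ⟨m, by rw [div_lt_iff₀ hc1p] at hm; linarith [hm]⟩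
  filter_upwards [eventually_ge_atTop (x0*κ^m), eventually_ge_atTop x0] with r hr1 hr2
  have hr0 : 0 < r := lt_of_lt_of_le hx0p hr2
  obtain ⟨N, hN1, hN2, hN3⟩ := aux_N hκ hx0p hr2
  have hmN : m ≤ N := hN3 m hr1
  have hchain := aux_chain f hq0 hq1 hρ1 hx0 hr0 (fun x => (hT x).le) N hN1
  have hfmono : (f : ℝ → ℝ) (r * κ⁻¹^N) ≤ f (x0*κ) := f.mono hN2.le
  have h2 : 1 - f (x0*κ) ≤ ρ^N * (1 - f r) := le_trans (by linarith) hchain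
  have hρN : (0:ℝ) < ρ^N := pow_pos hρ0 N
  have h3 : (1 - f (x0*κ))/ρ^N ≤ 1 - f r := (div_le_iff₀ hρN).2 (by linarith)
  have h1 : x0 * κ^N ≤ r := by
    have hκN : (0:ℝ) < κ^N := pow_pos hκ0 N
    rw [inv_pow, ← div_eq_mul_inv, le_div_iff₀ hκN] at hN1
    exact hN1
  calc M ≤ c1 * (κ/ρ)^m := hm
    _ ≤ c1 * (κ/ρ)^N := by
        exact mul_le_mul_of_nonneg_left (pow_le_pow_right₀ hbase.le hmN) hc1p.le
    _ = (x0 * κ^N) * ((1 - f (x0*κ))/ρ^N) := by rw [hc1, div_pow]; ring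
    _ ≤ r * ((1 - f (x0*κ))/ρ^N) := by
        refine mul_le_mul_of_nonneg_right h1 ?_
        exact div_nonneg (hT _).le hρN.le
    _ ≤ r * (1 - f r) := mul_le_mul_of_nonneg_left h3 hr0.le

lemma aux_geom {x : ℝ} (h0 : 0 ≤ x) (h1 : x < 1) (n : ℕ) :
    ∑ i ∈ Finset.range n, x^i ≤ (1-x)⁻¹ := by
  have hs : Summable (fun i : ℕ => x^i) := summable_geometric_of_lt_one h0 h1
  calc ∑ i ∈ Finset.range n, x^i ≤ ∑' i : ℕ, x^i :=
        Summable.sum_le_tsum _ (fun i _ => pow_nonneg h0 i) hs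
    _ = (1-x)⁻¹ := tsum_geometric_of_lt_one h0 h1

lemma aux_step {α κ a : ℝ} (hα0 : 0 < α) (hα1 : α < 1) (hκ : 1 < κ)
    (hκprop : (1-α)*κ + 1 ≤ (2-α)*κ^(1-α)) (ha : 0 < a) :
    (a*κ)*(a^(-α) - (a*κ)^(-α)) ≤ ((a*κ)^(1-α) - a^(1-α))/(1-α) := by
  have hκ0 : (0:ℝ) < κ := lt_trans one_pos hκ
  have hA : (0:ℝ) ≤ a^(1-α) := Real.rpow_nonneg ha.le _
  have e1 : (a*κ)^(-α) = a^(-α) * κ^(-α) := Real.mul_rpow ha.le hκ0.le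
  have e2 : (a*κ)^(1-α) = a^(1-α) * κ^(1-α) := Real.mul_rpow ha.le hκ0.le
  have e3 : a * a^(-α) = a^(1-α) := by
    nth_rewrite 1 [← Real.rpow_one a]
    rw [← Real.rpow_add ha, sub_eq_add_neg]
  have e4 : κ * κ^(-α) = κ^(1-α) := by
    nth_rewrite 1 [← Real.rpow_one κ]
    rw [← Real.rpow_add hκ0, sub_eq_add_neg]
  have hlin : (1-α)*(κ - κ^(1-α)) ≤ κ^(1-α) - 1 := by linarith
  rw [le_div_iff₀ (by linarith : (0:ℝ) < 1-α)]
  have expand : (a*κ)*(a^(-α) - (a*κ)^(-α)) = κ * a^(1-α) - κ^(1-α) * a^(1-α) := by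
    rw [e1]
    calc a*κ*(a^(-α) - a^(-α)*κ^(-α)) = κ*(a*a^(-α)) - (κ*κ^(-α))*(a*a^(-α)) := by ring
      _ = κ * a^(1-α) - κ^(1-α) * a^(1-α) := by rw [e3, e4]
  rw [expand, e2]
  nlinarith [mul_nonneg hA (sub_nonneg.2 hlin)]
set_option maxHeartbeats 2000000 in
theorem stmt_9 (α : ℝ) (hα : α ∈ Set.Ioo (0:ℝ) 1) (f : StieltjesFunction ℝ)
    (hf1 : ∀ x, f x < 1)
    (hrv : ∀ l : ℝ, 0 < l →
      Filter.Tendsto (fun x => (1 - f (l * x)) / (1 - f x)) Filter.atTop (nhds (l ^ (-α)))) :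
    ∀ y ∈ Set.Ioc (0:ℝ) 1,
      Filter.limsup
          (fun r => (1 - f r)⁻¹ * ∫ u in Set.Ioc (0:ℝ) (r * y), u / r ∂f.measure)
          Filter.atTop
        ≤ y ^ (1 - α) / (1 - α) := by
  obtain ⟨hα0, hα1⟩ := hα
  have hT : ∀ x, (0:ℝ) < 1 - f x := fun x => sub_pos.2 (hf1 x)
  obtain ⟨κ, hκ1, hκprop⟩ := aux_kappa ⟨hα0, hα1⟩
  have hκ0 : (0:ℝ) < κ := lt_trans one_pos hκ1
  obtain ⟨q, hqdef⟩ : ∃ q : ℝ, q = κ⁻¹ := ⟨_, rfl⟩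
  have hq0 : 0 < q := by rw [hqdef]; positivity
  have hq1 : q < 1 := by rw [hqdef]; exact inv_lt_one_of_one_lt₀ hκ1
  have hκq : κ * q = 1 := by rw [hqdef]; exact mul_inv_cancel₀ (ne_of_gt hκ0)
  have hκα : κ^α < κ := by
    calc κ^α < κ^(1:ℝ) := Real.rpow_lt_rpow_of_exponent_lt hκ1 hα1
      _ = κ := Real.rpow_one κ
  have hκα1 : 1 ≤ κ^α := Real.one_le_rpow hκ1.le hα0.le
  obtain ⟨ρ, hρdef⟩ : ∃ ρ : ℝ, ρ = (κ^α + κ)/2 := ⟨_, rfl⟩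
  have hρ1 : 1 ≤ ρ := by rw [hρdef]; linarith
  have hρκ : ρ < κ := by rw [hρdef]; linarith
  have hρα : κ^α < ρ := by rw [hρdef]; linarith
  have hρ0 : (0:ℝ) < ρ := lt_of_lt_of_le one_pos hρ1
  have hqρ : q*ρ < 1 := by
    calc q*ρ < q*κ := mul_lt_mul_of_pos_left hρκ hq0
      _ = 1 := by rw [mul_comm]; exact hκq
  have hqρ0 : (0:ℝ) ≤ q*ρ := by positivity
  have hqα : q^(-α) = κ^α := by
    rw [hqdef, Real.inv_rpow hκ0.le, ← Real.rpow_neg hκ0.le, neg_neg]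
  have hlim := hrv q hq0
  rw [hqα] at hlim
  have hev : ∀ᶠ x in atTop, (1 - f (q*x))/(1 - f x) < ρ :=
    hlim.eventually (eventually_lt_nhds hρα)
  obtain ⟨x1, hx1⟩ := eventually_atTop.1 hev
  obtain ⟨x0, hx0def⟩ : ∃ x0 : ℝ, x0 = max x1 1 := ⟨_, rfl⟩
  have hx0p : (0:ℝ) < x0 := by rw [hx0def]; exact lt_of_lt_of_le one_pos (le_max_right _ _)
  have hx0 : ∀ x, x0 ≤ x → 1 - f (x*q) ≤ ρ * (1 - f x) := by
    intro x hx
    have h := hx1 x (le_trans (le_trans (le_max_left x1 1) hx0def.symm.le) hx)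
    rw [div_lt_iff₀ (hT x)] at h
    rw [mul_comm x q]
    linarith
  obtain ⟨K, hKdef⟩ : ∃ K : ℝ, K = ρ/(1 - q*ρ) := ⟨_, rfl⟩
  have hK0 : 0 < K := by rw [hKdef]; exact div_pos hρ0 (by linarith)
  obtain ⟨C0, hC0def⟩ : ∃ C0 : ℝ, C0 = x0*κ*(1 - f 0) := ⟨_, rfl⟩
  have htop := aux_top f hκ1 hρ1 hρκ hx0p hT (by rw [← hqdef]; exact hx0)
  intro y hy
  obtain ⟨hy0, hy1⟩ := hy
  have hyq : ∀ j : ℕ, (0:ℝ) < y*q^j := fun j => mul_pos hy0 (pow_pos hq0 j)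
  have hR : ∀ a : ℝ, 0 < a →
      Tendsto (fun r => (1 - f (r*a))/(1 - f r)) atTop (𝓝 (a^(-α))) := by
    intro a ha
    have := hrv a ha
    simpa [mul_comm] using this
  have key : ∀ n : ℕ, Filter.limsup
      (fun r => (1 - f r)⁻¹ * ∫ u in Set.Ioc (0:ℝ) (r * y), u / r ∂f.measure) Filter.atTop
      ≤ y^(1-α)/(1-α) + K*(y*q^n)*((y*q^n)^(-α)) := by
    intro n
    obtain ⟨G, hGdef⟩ : ∃ G : ℝ → ℝ, ∀ r, G r = C0*(r*(1 - f r))⁻¹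
      + (∑ j ∈ Finset.range n, (y*q^j) *
          ((1 - f (r*(y*q^(j+1))))/(1 - f r) - (1 - f (r*(y*q^j)))/(1 - f r)))
      + K*(y*q^n) * ((1 - f (r*(y*q^n)))/(1 - f r)) := ⟨_, fun r => rfl⟩
    have hGlim : Tendsto G atTop (𝓝 (C0*0
        + (∑ j ∈ Finset.range n, (y*q^j)*((y*q^(j+1))^(-α) - (y*q^j)^(-α)))
        + K*(y*q^n)*((y*q^n)^(-α)))) := by
      rw [show G = fun r => C0*(r*(1 - f r))⁻¹
        + (∑ j ∈ Finset.range n, (y*q^j) *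
            ((1 - f (r*(y*q^(j+1))))/(1 - f r) - (1 - f (r*(y*q^j)))/(1 - f r)))
        + K*(y*q^n) * ((1 - f (r*(y*q^n)))/(1 - f r)) from funext hGdef]
      refine Tendsto.add (Tendsto.add ?_ ?_) ?_
      · exact htop.inv_tendsto_atTop.const_mul C0
      · exact tendsto_finset_sum _
          (fun j _ => ((hR _ (hyq (j+1))).sub (hR _ (hyq j))).const_mul _)
      · exact (hR _ (hyq n)).const_mul _
    have hFG : ∀ᶠ r in atTop,
        (1 - f r)⁻¹ * (∫ u in Set.Ioc (0:ℝ) (r * y), u / r ∂f.measure) ≤ G r := by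
      filter_upwards [eventually_ge_atTop 1, eventually_ge_atTop ((x0*κ^n)/y)]
        with r hr1 hry
      have hr0 : (0:ℝ) < r := lt_of_lt_of_le one_pos hr1
      have hTr : (0:ℝ) < 1 - f r := hT r
      have hb0 : 0 < r*y := mul_pos hr0 hy0
      have hr2 : x0*κ^n ≤ r*y := by
        rw [div_le_iff₀ hy0] at hry
        linarith
      have hx0b : x0 ≤ r*y := by
        have h1 : (1:ℝ) ≤ κ^n := one_le_pow₀ hκ1.le
        nlinarith
      obtain ⟨N, hN1, hN2, hN3⟩ := aux_N hκ1 hx0p hx0b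
      rw [← hqdef] at hN1 hN2
      have hnN : n ≤ N := hN3 n hr2
      have hqNpos : ∀ m : ℕ, (0:ℝ) < q^m := fun m => pow_pos hq0 m
      -- remainder bound
      have rem : ∫ u in Ioc 0 (r*y*q^N), u ∂f.measure ≤ C0 := by
        have h1 : ∫ u in Ioc 0 (r*y*q^N), u ∂f.measure ≤ (r*y*q^N)*(f (r*y*q^N) - f 0) :=
          aux_bound f le_rfl (by positivity)
        have h3 : f (r*y*q^N) - f 0 ≤ 1 - f 0 := by linarith [hf1 (r*y*q^N)]
        have h4 : (0:ℝ) ≤ f (r*y*q^N) - f 0 := sub_nonneg.2 (f.mono (by positivity))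
        have h5 : (0:ℝ) ≤ 1 - f 0 := (hT 0).le
        calc ∫ u in Ioc 0 (r*y*q^N), u ∂f.measure ≤ (r*y*q^N)*(f (r*y*q^N) - f 0) := h1
          _ ≤ (x0*κ)*(1 - f 0) := mul_le_mul hN2.le h3 h4 (by positivity)
          _ = C0 := by rw [hC0def]
      -- tail bound
      have htail : ∑ j ∈ Finset.Ico n N, r*y*q^j*(f (r*y*q^j) - f (r*y*q^(j+1)))
          ≤ K*(r*y*q^n)*(1 - f (r*y*q^n)) := by
        have hc0 : 0 < r*y*q^n := by positivity
        have hTc : (0:ℝ) ≤ 1 - f (r*y*q^n) := (hT _).le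
        rw [Finset.sum_Ico_eq_sum_range]
        have hterm : ∀ i ∈ Finset.range (N-n),
            r*y*q^(n+i)*(f (r*y*q^(n+i)) - f (r*y*q^(n+i+1)))
            ≤ ((r*y*q^n)*(1 - f (r*y*q^n))*ρ)*(q*ρ)^i := by
          intro i hi
          have hiN : n+i+1 ≤ N := by
            simp only [Finset.mem_range] at hi
            omega
          have hxc : x0 ≤ (r*y*q^n)*q^(i+1) := by
            have e : (r*y*q^n)*q^(i+1) = r*y*q^(n+i+1) := by ring
            rw [e]
            refine hN1.trans ?_
            have : q^N ≤ q^(n+i+1) := pow_le_pow_of_le_one hq0.le hq1.le hiN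
            nlinarith
          have hchain := aux_chain f hq0 hq1 hρ1 hx0 hc0 (fun x => (hT x).le) (i+1) hxc
          have e : (r*y*q^n)*q^(i+1) = r*y*q^(n+i+1) := by ring
          rw [e] at hchain
          have hd1 : f (r*y*q^(n+i)) - f (r*y*q^(n+i+1)) ≤ 1 - f (r*y*q^(n+i+1)) := by
            linarith [hf1 (r*y*q^(n+i))]
          have hd0 : (0:ℝ) ≤ f (r*y*q^(n+i)) - f (r*y*q^(n+i+1)) := by
            refine sub_nonneg.2 (f.mono ?_)
            have : q^(n+i+1) ≤ q^(n+i) := pow_le_pow_of_le_one hq0.le hq1.le (by omega)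
            nlinarith
          have hsplit : r*y*q^(n+i) = (r*y*q^n)*q^i := by ring
          calc r*y*q^(n+i)*(f (r*y*q^(n+i)) - f (r*y*q^(n+i+1)))
              ≤ r*y*q^(n+i)*(ρ^(i+1)*(1 - f (r*y*q^n))) := by
                refine mul_le_mul_of_nonneg_left (hd1.trans hchain) (by positivity)
            _ = ((r*y*q^n)*(1 - f (r*y*q^n))*ρ)*(q*ρ)^i := by
                rw [hsplit, mul_pow]
                ring
        calc ∑ i ∈ Finset.range (N-n), r*y*q^(n+i)*(f (r*y*q^(n+i)) - f (r*y*q^(n+i+1)))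
            ≤ ∑ i ∈ Finset.range (N-n), ((r*y*q^n)*(1 - f (r*y*q^n))*ρ)*(q*ρ)^i :=
              Finset.sum_le_sum hterm
          _ = ((r*y*q^n)*(1 - f (r*y*q^n))*ρ) * ∑ i ∈ Finset.range (N-n), (q*ρ)^i := by
              rw [Finset.mul_sum]
          _ ≤ ((r*y*q^n)*(1 - f (r*y*q^n))*ρ) * (1-q*ρ)⁻¹ := by
              refine mul_le_mul_of_nonneg_left (aux_geom hqρ0 hqρ _) (by positivity)
          _ = K*(r*y*q^n)*(1 - f (r*y*q^n)) := by
              rw [hKdef, div_eq_mul_inv]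
              ring
      -- assemble bound on the integral
      have hI : ∫ u in Set.Ioc (0:ℝ) (r*y), u ∂f.measure
          ≤ C0 + (∑ j ∈ Finset.range n, r*(y*q^j)*((1 - f (r*(y*q^(j+1)))) - (1 - f (r*(y*q^j)))))
            + K*(r*(y*q^n))*(1 - f (r*(y*q^n))) := by
        have step1 := aux_geo_split f hq0 hq1 hb0 N
        have hsum : ∑ j ∈ Finset.range N, r*y*q^j*(f (r*y*q^j) - f (r*y*q^(j+1)))
            = (∑ j ∈ Finset.range n, r*y*q^j*(f (r*y*q^j) - f (r*y*q^(j+1))))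
              + ∑ j ∈ Finset.Ico n N, r*y*q^j*(f (r*y*q^j) - f (r*y*q^(j+1))) := by
          rw [Finset.range_eq_Ico, Finset.range_eq_Ico]
          exact (Finset.sum_Ico_consecutive _ (Nat.zero_le n) hnN).symm
        have heq : ∀ j ∈ Finset.range n, r*y*q^j*(f (r*y*q^j) - f (r*y*q^(j+1)))
            = r*(y*q^j)*((1 - f (r*(y*q^(j+1)))) - (1 - f (r*(y*q^j)))) := by
          intro j _
          rw [mul_assoc r y (q^j), mul_assoc r y (q^(j+1))]
          ring
        have e2 : r*y*q^n = r*(y*q^n) := by ring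
        calc ∫ u in Set.Ioc (0:ℝ) (r*y), u ∂f.measure
            ≤ (∫ u in Ioc 0 (r*y*q^N), u ∂f.measure)
              + ∑ j ∈ Finset.range N, r*y*q^j*(f (r*y*q^j) - f (r*y*q^(j+1))) := step1
          _ ≤ C0 + ((∑ j ∈ Finset.range n, r*y*q^j*(f (r*y*q^j) - f (r*y*q^(j+1))))
              + K*(r*y*q^n)*(1 - f (r*y*q^n))) := by
              rw [hsum]
              have := htail
              linarith [rem]
          _ = C0 + (∑ j ∈ Finset.range n, r*(y*q^j)*((1 - f (r*(y*q^(j+1)))) - (1 - f (r*(y*q^j)))))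
              + K*(r*(y*q^n))*(1 - f (r*(y*q^n))) := by
              rw [Finset.sum_congr rfl heq, e2]
              ring
      -- from integral bound to F r ≤ G r
      have hrne : r ≠ 0 := ne_of_gt hr0
      have hTne : (1 - f r) ≠ 0 := ne_of_gt hTr
      have hFr : (1 - f r)⁻¹ * (∫ u in Set.Ioc (0:ℝ) (r * y), u / r ∂f.measure)
          = (∫ u in Set.Ioc (0:ℝ) (r*y), u ∂f.measure) / (r*(1 - f r)) := by
        rw [integral_div]
        field_simp
      rw [hFr]
      have hdiv : (∫ u in Set.Ioc (0:ℝ) (r*y), u ∂f.measure) / (r*(1 - f r))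
          ≤ (C0 + (∑ j ∈ Finset.range n, r*(y*q^j)*((1 - f (r*(y*q^(j+1)))) - (1 - f (r*(y*q^j)))))
            + K*(r*(y*q^n))*(1 - f (r*(y*q^n)))) / (r*(1 - f r)) := by
        gcongr
      refine hdiv.trans (le_of_eq ?_)
      have t2 : ∀ j ∈ Finset.range n,
          (r*(y*q^j)*((1 - f (r*(y*q^(j+1)))) - (1 - f (r*(y*q^j)))))/(r*(1 - f r))
          = (y*q^j)*((1 - f (r*(y*q^(j+1))))/(1 - f r) - (1 - f (r*(y*q^j)))/(1 - f r)) := by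
        intro j _
        field_simp
      have t3 : (K*(r*(y*q^n))*(1 - f (r*(y*q^n))))/(r*(1 - f r))
          = K*(y*q^n)*((1 - f (r*(y*q^n)))/(1 - f r)) := by
        field_simp
      calc (C0 + (∑ j ∈ Finset.range n, r*(y*q^j)*((1 - f (r*(y*q^(j+1)))) - (1 - f (r*(y*q^j)))))
            + K*(r*(y*q^n))*(1 - f (r*(y*q^n)))) / (r*(1 - f r))
          = C0/(r*(1 - f r))
            + (∑ j ∈ Finset.range n, (r*(y*q^j)*((1 - f (r*(y*q^(j+1)))) - (1 - f (r*(y*q^j)))))/(r*(1 - f r)))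
            + (K*(r*(y*q^n))*(1 - f (r*(y*q^n))))/(r*(1 - f r)) := by
            rw [add_div, add_div, Finset.sum_div]
        _ = C0*(r*(1 - f r))⁻¹
            + (∑ j ∈ Finset.range n, (y*q^j) *
                ((1 - f (r*(y*q^(j+1))))/(1 - f r) - (1 - f (r*(y*q^j)))/(1 - f r)))
            + K*(y*q^n) * ((1 - f (r*(y*q^n)))/(1 - f r)) := by
            rw [div_eq_mul_inv C0, Finset.sum_congr rfl t2, t3]
        _ = G r := (hGdef r).symm
    have hF0 : ∀ᶠ r in atTop, (0:ℝ) ≤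
        (1 - f r)⁻¹ * ∫ u in Set.Ioc (0:ℝ) (r * y), u / r ∂f.measure := by
      filter_upwards [eventually_ge_atTop (1:ℝ)] with r hr1
      have hr0 : (0:ℝ) < r := lt_of_lt_of_le one_pos hr1
      refine mul_nonneg (inv_nonneg.2 (hT r).le) ?_
      refine setIntegral_nonneg measurableSet_Ioc (fun x hx => ?_)
      exact div_nonneg (le_of_lt hx.1) hr0.le
    have hcb : IsCoboundedUnder (· ≤ ·) atTop
        (fun r => (1 - f r)⁻¹ * ∫ u in Set.Ioc (0:ℝ) (r * y), u / r ∂f.measure) :=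
      isCoboundedUnder_le_of_eventually_le atTop hF0
    have h1 := limsup_le_limsup hFG hcb hGlim.isBoundedUnder_le
    rw [hGlim.limsup_eq] at h1
    refine h1.trans ?_
    have hS : (∑ j ∈ Finset.range n, (y*q^j)*((y*q^(j+1))^(-α) - (y*q^j)^(-α)))
        ≤ y^(1-α)/(1-α) := by
      have hqκ : q*κ = 1 := by rw [mul_comm]; exact hκq
      have hterm : ∀ j ∈ Finset.range n, (y*q^j)*((y*q^(j+1))^(-α) - (y*q^j)^(-α))
          ≤ (y*q^j)^(1-α)/(1-α) - (y*q^(j+1))^(1-α)/(1-α) := by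
        intro j _
        have ha : (0:ℝ) < y*q^(j+1) := hyq (j+1)
        have hb : y*q^j = (y*q^(j+1))*κ := by
          calc y*q^j = y*q^j*(q*κ) := by rw [hqκ, mul_one]
            _ = (y*q^(j+1))*κ := by ring
        have hstep := aux_step hα0 hα1 hκ1 hκprop ha
        rw [sub_div] at hstep
        calc (y*q^j)*((y*q^(j+1))^(-α) - (y*q^j)^(-α))
            = ((y*q^(j+1))*κ)*((y*q^(j+1))^(-α) - ((y*q^(j+1))*κ)^(-α)) := by rw [← hb]
          _ ≤ ((y*q^(j+1))*κ)^(1-α)/(1-α) - (y*q^(j+1))^(1-α)/(1-α) := hstep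
          _ = (y*q^j)^(1-α)/(1-α) - (y*q^(j+1))^(1-α)/(1-α) := by rw [← hb]
      calc (∑ j ∈ Finset.range n, (y*q^j)*((y*q^(j+1))^(-α) - (y*q^j)^(-α)))
          ≤ ∑ j ∈ Finset.range n, ((y*q^j)^(1-α)/(1-α) - (y*q^(j+1))^(1-α)/(1-α)) :=
            Finset.sum_le_sum hterm
        _ = (y*q^0)^(1-α)/(1-α) - (y*q^n)^(1-α)/(1-α) :=
            Finset.sum_range_sub' (fun j => (y*q^j)^(1-α)/(1-α)) n
        _ ≤ y^(1-α)/(1-α) := by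
            have h0 : (0:ℝ) ≤ (y*q^n)^(1-α)/(1-α) :=
              div_nonneg (Real.rpow_nonneg (hyq n).le _) (by linarith)
            have hy' : (y*q^0:ℝ) = y := by norm_num
            rw [hy']
            linarith
    linarith [hS]
  have hrw : ∀ n : ℕ, y^(1-α)/(1-α) + K*(y*q^n)*((y*q^n)^(-α))
      = y^(1-α)/(1-α) + K*(y^(1-α))*((q^(1-α))^n) := by
    intro n
    have hyqn := hyq n
    have e1 : (y*q^n)*((y*q^n)^(-α)) = (y*q^n)^(1-α) := by
      nth_rewrite 1 [← Real.rpow_one (y*q^n)]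
      rw [← Real.rpow_add hyqn, sub_eq_add_neg]
    have e2 : (y*q^n:ℝ)^(1-α) = y^(1-α) * ((q^n:ℝ))^(1-α) :=
      Real.mul_rpow hy0.le (pow_pos hq0 n).le
    have e3 : ((q^n:ℝ))^(1-α) = (q^(1-α))^n := by
      rw [← Real.rpow_natCast q n, ← Real.rpow_natCast (q^(1-α)) n,
        ← Real.rpow_mul hq0.le, ← Real.rpow_mul hq0.le, mul_comm]
    have : K*(y*q^n)*((y*q^n)^(-α)) = K*(y^(1-α))*((q^(1-α))^n) := by
      calc K*(y*q^n)*((y*q^n)^(-α)) = K*((y*q^n)*((y*q^n)^(-α))) := by ring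
        _ = K*(y^(1-α)*((q^n:ℝ))^(1-α)) := by rw [e1, e2]
        _ = K*(y^(1-α)*((q^(1-α))^n)) := by rw [e3]
        _ = K*(y^(1-α))*((q^(1-α))^n) := by ring
    rw [this]
  have hq1α : q^(1-α) < 1 := Real.rpow_lt_one hq0.le hq1 (by linarith)
  have hq1α0 : (0:ℝ) ≤ q^(1-α) := Real.rpow_nonneg hq0.le _
  have hlim2 : Tendsto (fun n : ℕ => y^(1-α)/(1-α) + K*(y^(1-α))*((q^(1-α))^n)) atTop
      (𝓝 (y^(1-α)/(1-α) + K*(y^(1-α))*0)) :=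
    tendsto_const_nhds.add ((tendsto_pow_atTop_nhds_zero_of_lt_one hq1α0 hq1α).const_mul _)
  have hfin := ge_of_tendsto' hlim2 (fun n => (key n).trans (le_of_eq (hrw n)))
  simpa using hfin
end

section
/- For α ∈ (0,1) and ε, z with 0 < ε and 0 ≤ z < 1, define R₁(z) = (1-z)^{1-α} Φ_α(ε/(1-z))^{-1} [ (1 + ε/(1-z))^{1-α} - 1 ]. Then there exist constants C̃₁ = inf_{0<y≤1} y^{α-1}Φ_α(y) > 0 and C̃₂ = sup_{0<y≤1}((1+y)^{1-α}-1)/y < ∞ such that: if ε ≥ 1-z then R₁(z) ≤ 2^{1-α} Φ_α(1)^{-1} ε^{1-α}, and if 0 < ε < 1-z then R₁(z) ≤ (C̃₂/C̃₁) ε^{min(α, 1-α)}. In particular sup_{z∈[0,1)} R₁(z) → 0 as ε → 0. -/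
open MeasureTheory Real Set Filter

-- integrability of the integrand on (0,t)
lemma aux_integrable {α : ℝ} (hα0 : 0 < α) (hα1 : α < 1) (t : ℝ) :
    IntegrableOn (fun u : ℝ => u ^ (-α) * (1 + u)⁻¹) (Set.Ioo (0:ℝ) t) := by
  have hrpow : IntegrableOn (fun u : ℝ => u ^ (-α)) (Set.Ioo (0:ℝ) t) := by
    rcases le_or_gt t 0 with ht | ht
    · exact IntegrableOn.mono_set (integrableOn_empty) (by simp [Set.Ioo_eq_empty_iff, not_lt.2 ht])
    · have := (intervalIntegral.intervalIntegrable_rpow' (a := 0) (b := t) (r := -α) (by linarith))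
      have h2 : IntegrableOn (fun u : ℝ => u ^ (-α)) (Set.Ioc (0:ℝ) t) :=
        (intervalIntegrable_iff_integrableOn_Ioc_of_le ht.le).mp this
      exact h2.mono_set Set.Ioo_subset_Ioc_self
  refine hrpow.mono' ?_ ?_
  · have h1 : Measurable (fun u : ℝ => u ^ (-α) * (1 + u)⁻¹) :=
      (measurable_id.pow_const _).mul ((measurable_const.add measurable_id).inv)
    exact h1.aestronglyMeasurable
  · filter_upwards [ae_restrict_mem measurableSet_Ioo] with u hu
    have hu0 : 0 < u := hu.1
    have h1u : (1:ℝ) ≤ 1 + u := by linarith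
    rw [Real.norm_eq_abs, abs_mul, abs_of_nonneg (Real.rpow_nonneg hu0.le _),
      abs_of_nonneg (by positivity)]
    nth_rewrite 2 [← mul_one (u ^ (-α))]
    gcongr
    rw [inv_le_one_iff₀]; right; exact h1u

theorem stmt_14 (α : ℝ) (hα : α ∈ Set.Ioo (0:ℝ) 1)
    (Φ : ℝ → ℝ)
    (hΦ : ∀ y > (0:ℝ), Φ y = (Real.sin (π * α) / π) * ∫ u in Set.Ioo (0:ℝ) y, u ^ (-α) * (1 + u)⁻¹)
    (R₁ : ℝ → ℝ → ℝ)
    (hR₁ : ∀ ε z, R₁ ε z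
      = (1 - z) ^ (1 - α) / Φ (ε / (1 - z)) * ((1 + ε / (1 - z)) ^ (1 - α) - 1)) :
    ∃ C₁ > (0:ℝ), ∃ C₂ : ℝ,
      (∀ y ∈ Set.Ioc (0:ℝ) 1, C₁ ≤ y ^ (α - 1) * Φ y) ∧
      (∀ y ∈ Set.Ioc (0:ℝ) 1, ((1 + y) ^ (1 - α) - 1) / y ≤ C₂) ∧
      (∀ ε > (0:ℝ), ∀ z ∈ Set.Ico (0:ℝ) 1,
        (1 - z ≤ ε → R₁ ε z ≤ 2 ^ (1 - α) / Φ 1 * ε ^ (1 - α)) ∧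
        (ε < 1 - z → R₁ ε z ≤ C₂ / C₁ * ε ^ (min α (1 - α)))) ∧
      (∀ δ > (0:ℝ), ∃ ε₀ > (0:ℝ), ∀ ε, 0 < ε → ε < ε₀ → ∀ z ∈ Set.Ico (0:ℝ) 1, R₁ ε z ≤ δ) := by
  obtain ⟨hα0, hα1⟩ := hα
  have hsin : 0 < Real.sin (π * α) :=
    Real.sin_pos_of_pos_of_lt_pi (by positivity) (by nlinarith [Real.pi_pos])
  have hc : 0 < Real.sin (π * α) / π := div_pos hsin Real.pi_pos
  set c := Real.sin (π * α) / π with hcdef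
  set g : ℝ → ℝ := fun u => u ^ (-α) * (1 + u)⁻¹ with hg
  -- nonnegativity of g on (0,∞)
  have hg_nonneg : ∀ u : ℝ, 0 < u → 0 ≤ g u := fun u hu => by
    have : (0:ℝ) ≤ (1 + u)⁻¹ := by positivity
    exact mul_nonneg (Real.rpow_nonneg hu.le _) this
  -- monotonicity of the integral
  have hmono : ∀ a b : ℝ, 0 < a → a ≤ b →
      (∫ u in Set.Ioo (0:ℝ) a, g u) ≤ ∫ u in Set.Ioo (0:ℝ) b, g u := by
    intro a b ha hab
    refine setIntegral_mono_set (aux_integrable hα0 hα1 b) ?_ ?_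
    · filter_upwards [ae_restrict_mem measurableSet_Ioo] with u hu using hg_nonneg u hu.1
    · exact Filter.Eventually.of_forall fun u hu => ⟨hu.1, lt_of_lt_of_le hu.2 hab⟩
  -- lower bound for the integral on (0, y], y ≤ 1
  have hlow : ∀ y : ℝ, 0 < y → y ≤ 1 →
      (1/2) * (y ^ (1 - α) / (1 - α)) ≤ ∫ u in Set.Ioo (0:ℝ) y, g u := by
    intro y hy hy1
    have hint_rpow : IntegrableOn (fun u : ℝ => u ^ (-α)) (Set.Ioo (0:ℝ) y) := by
      have := (intervalIntegral.intervalIntegrable_rpow' (a := 0) (b := y) (r := -α) (by linarith))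
      exact ((intervalIntegrable_iff_integrableOn_Ioc_of_le hy.le).mp this).mono_set
        Set.Ioo_subset_Ioc_self
    have step : (∫ u in Set.Ioo (0:ℝ) y, (1/2 : ℝ) * u ^ (-α)) ≤ ∫ u in Set.Ioo (0:ℝ) y, g u := by
      refine setIntegral_mono_on (hint_rpow.const_mul _) (aux_integrable hα0 hα1 y)
        measurableSet_Ioo ?_
      intro u hu
      have hu0 : 0 < u := hu.1
      have h2 : 1 + u ≤ 2 := by have := hu.2; linarith
      have : (1/2 : ℝ) ≤ (1 + u)⁻¹ := by
        rw [show (1/2:ℝ) = (2:ℝ)⁻¹ by norm_num]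
        exact inv_anti₀ (by linarith) h2
      calc (1/2 : ℝ) * u ^ (-α) = u ^ (-α) * (1/2) := by ring
        _ ≤ u ^ (-α) * (1 + u)⁻¹ := by gcongr
    have hval : (∫ u in Set.Ioo (0:ℝ) y, u ^ (-α)) = y ^ (1 - α) / (1 - α) := by
      have h1 : (∫ u in Set.Ioo (0:ℝ) y, u ^ (-α)) = ∫ u in (0:ℝ)..y, u ^ (-α) := by
        rw [intervalIntegral.integral_of_le hy.le, MeasureTheory.integral_Ioc_eq_integral_Ioo]
      rw [h1, integral_rpow (Or.inl (by linarith))]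
      rw [Real.zero_rpow (by linarith : -α + 1 ≠ 0)]
      ring_nf
    calc (1/2) * (y ^ (1 - α) / (1 - α)) = ∫ u in Set.Ioo (0:ℝ) y, (1/2 : ℝ) * u ^ (-α) := by
          rw [MeasureTheory.integral_const_mul, hval]
      _ ≤ _ := step
  -- C₁ lower bound for y^{α-1} Φ y
  set C₁ : ℝ := c * (1/2) * (1/(1-α)) with hC₁def
  have hC₁pos : 0 < C₁ := by
    have h1α : 0 < 1 - α := by linarith
    apply mul_pos (mul_pos hc (by norm_num)); positivity
  have hΦlow : ∀ y ∈ Set.Ioc (0:ℝ) 1, C₁ * y ^ (1 - α) ≤ Φ y := by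
    rintro y ⟨hy0, hy1⟩
    rw [hΦ y hy0]
    have := hlow y hy0 hy1
    calc C₁ * y ^ (1 - α) = c * ((1/2) * (y ^ (1 - α) / (1 - α))) := by
          rw [hC₁def]; field_simp
      _ ≤ c * ∫ u in Set.Ioo (0:ℝ) y, g u := by gcongr
  have hkey1 : ∀ y ∈ Set.Ioc (0:ℝ) 1, C₁ ≤ y ^ (α - 1) * Φ y := by
    rintro y hy
    obtain ⟨hy0, hy1⟩ := hy
    have h := hΦlow y ⟨hy0, hy1⟩
    have hyp : 0 < y ^ (α - 1) := Real.rpow_pos_of_pos hy0 _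
    have : y ^ (α - 1) * (C₁ * y ^ (1 - α)) ≤ y ^ (α - 1) * Φ y := by gcongr
    calc C₁ = y ^ (α - 1) * (C₁ * y ^ (1 - α)) := by
          rw [mul_comm C₁, ← mul_assoc, ← Real.rpow_add hy0]
          norm_num
      _ ≤ _ := this
  -- Φ positive on (0, 1]
  have hΦpos : ∀ y ∈ Set.Ioc (0:ℝ) 1, 0 < Φ y := by
    rintro y ⟨hy0, hy1⟩
    have := hΦlow y ⟨hy0, hy1⟩
    have : 0 < C₁ * y ^ (1 - α) := mul_pos hC₁pos (Real.rpow_pos_of_pos hy0 _)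
    linarith [hΦlow y ⟨hy0, hy1⟩]
  have hΦ1pos : 0 < Φ 1 := hΦpos 1 ⟨one_pos, le_refl 1⟩
  -- Φ monotone: Φ 1 ≤ Φ t for t ≥ 1
  have hΦmono : ∀ t : ℝ, 1 ≤ t → Φ 1 ≤ Φ t := by
    intro t ht
    rw [hΦ 1 one_pos, hΦ t (by linarith)]
    gcongr c * ?_
    exact hmono 1 t one_pos ht
  have hΦpos' : ∀ t : ℝ, 0 < t → 0 < Φ t := by
    intro t ht
    rcases le_or_gt t 1 with h | h
    · exact hΦpos t ⟨ht, h⟩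
    · exact lt_of_lt_of_le hΦ1pos (hΦmono t h.le)
  -- Bernoulli : (1+y)^{1-α} - 1 ≤ y for y ≥ 0
  have hbern : ∀ y : ℝ, 0 ≤ y → (1 + y) ^ (1 - α) - 1 ≤ y := by
    intro y hy
    have := rpow_one_add_le_one_add_mul_self (s := y) (by linarith) (p := 1 - α)
      (by linarith) (by linarith)
    nlinarith
  have hkey2 : ∀ y ∈ Set.Ioc (0:ℝ) 1, ((1 + y) ^ (1 - α) - 1) / y ≤ (1:ℝ) := by
    rintro y ⟨hy0, _⟩
    rw [div_le_one hy0]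
    exact hbern y hy0.le
  have hmain : ∀ ε > (0:ℝ), ∀ z ∈ Set.Ico (0:ℝ) 1,
      (1 - z ≤ ε → R₁ ε z ≤ 2 ^ (1 - α) / Φ 1 * ε ^ (1 - α)) ∧
      (ε < 1 - z → R₁ ε z ≤ 1 / C₁ * ε ^ (min α (1 - α))) := by
    rintro ε hε z ⟨hz0, hz1⟩
    have hw : 0 < 1 - z := by linarith
    set w := 1 - z with hwdef
    set t := ε / w with htdef
    have ht0 : 0 < t := div_pos hε hw
    have hwt : w * t = ε := by rw [mul_comm]; exact div_mul_cancel₀ ε hw.ne'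
    constructor
    · -- case 1 : w ≤ ε, i.e. t ≥ 1
      intro hwe
      have ht1 : 1 ≤ t := (one_le_div hw).mpr hwe
      have hΦt : 0 < Φ t := hΦpos' t ht0
      rw [hR₁]
      have hnum : w ^ (1 - α) * ((1 + t) ^ (1 - α) - 1) ≤ 2 ^ (1 - α) * ε ^ (1 - α) := by
        have h1 : w ^ (1 - α) * ((1 + t) ^ (1 - α) - 1) ≤ w ^ (1 - α) * (1 + t) ^ (1 - α) := by
          have h' : (1 + t) ^ (1 - α) - 1 ≤ (1 + t) ^ (1 - α) := by linarith
          have hnn : 0 ≤ w ^ (1 - α) := Real.rpow_nonneg hw.le _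
          exact mul_le_mul_of_nonneg_left h' hnn
        have h2 : w ^ (1 - α) * (1 + t) ^ (1 - α) = (w * (1 + t)) ^ (1 - α) :=
          (Real.mul_rpow hw.le (by linarith)).symm
        have h3 : w * (1 + t) = w + ε := by rw [mul_add, mul_one, hwt]
        have h4 : (w + ε) ^ (1 - α) ≤ (2 * ε) ^ (1 - α) := by
          apply Real.rpow_le_rpow (by linarith) (by linarith) (by linarith)
        calc w ^ (1 - α) * ((1 + t) ^ (1 - α) - 1) ≤ (w * (1 + t)) ^ (1 - α) := by
              rw [← h2]; exact h1
          _ = (w + ε) ^ (1 - α) := by rw [h3]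
          _ ≤ (2 * ε) ^ (1 - α) := h4
          _ = 2 ^ (1 - α) * ε ^ (1 - α) := Real.mul_rpow (by norm_num) hε.le
      have hrw : w ^ (1 - α) / Φ t * ((1 + t) ^ (1 - α) - 1)
          = w ^ (1 - α) * ((1 + t) ^ (1 - α) - 1) / Φ t := by ring
      rw [hrw]
      rw [div_le_iff₀ (hΦpos' t ht0)] at *
      calc w ^ (1 - α) * ((1 + t) ^ (1 - α) - 1) ≤ 2 ^ (1 - α) * ε ^ (1 - α) := hnum
        _ = 2 ^ (1 - α) / Φ 1 * ε ^ (1 - α) * Φ 1 := by field_simp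
        _ ≤ 2 ^ (1 - α) / Φ 1 * ε ^ (1 - α) * Φ t := by
            have h2 : (0:ℝ) < 2 ^ (1 - α) := Real.rpow_pos_of_pos two_pos _
            have h3 : (0:ℝ) ≤ 2 ^ (1 - α) / Φ 1 * ε ^ (1 - α) := by positivity
            exact mul_le_mul_of_nonneg_left (hΦmono t ht1) h3
    · -- case 2 : ε < w, i.e. t < 1
      intro hew
      have ht1 : t < 1 := (div_lt_one hw).mpr hew
      have hw1 : w ≤ 1 := by linarith
      have hΦt : 0 < Φ t := hΦpos' t ht0
      have hΦtlow : C₁ * t ^ (1 - α) ≤ Φ t := hΦlow t ⟨ht0, ht1.le⟩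
      rw [hR₁]
      set m := min α (1 - α) with hm
      have hm1 : m ≤ α := min_le_left _ _
      have hm2 : m ≤ 1 - α := min_le_right _ _
      have hm0 : 0 < m := lt_min hα0 (by linarith)
      -- key: w^{1-α} * t^α ≤ ε^m
      have hkey : w ^ (1 - α) * t ^ α ≤ ε ^ m := by
        have h1 : ε ^ m = w ^ m * t ^ m := by
          rw [← Real.mul_rpow hw.le ht0.le, hwt]
        have h2 : w ^ (1 - α) = w ^ m * w ^ (1 - α - m) := by
          rw [← Real.rpow_add hw]; ring_nf
        have h3 : t ^ α = t ^ m * t ^ (α - m) := by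
          rw [← Real.rpow_add ht0]; ring_nf
        have h4 : w ^ (1 - α - m) ≤ 1 := Real.rpow_le_one hw.le hw1 (by linarith)
        have h5 : t ^ (α - m) ≤ 1 := Real.rpow_le_one ht0.le ht1.le (by linarith)
        calc w ^ (1 - α) * t ^ α = (w ^ m * t ^ m) * (w ^ (1 - α - m) * t ^ (α - m)) := by
              rw [h2, h3]; ring
          _ ≤ (w ^ m * t ^ m) * (1 * 1) := by
              have hnn : 0 ≤ w ^ m * t ^ m := by
                exact mul_nonneg (Real.rpow_nonneg hw.le _) (Real.rpow_nonneg ht0.le _)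
              have : w ^ (1 - α - m) * t ^ (α - m) ≤ 1 * 1 := by
                exact mul_le_mul h4 h5 (Real.rpow_nonneg ht0.le _) zero_le_one
              exact mul_le_mul_of_nonneg_left this hnn
          _ = ε ^ m := by rw [h1]; ring
      -- now the bound
      have hbt : (1 + t) ^ (1 - α) - 1 ≤ t := hbern t ht0.le
      have hbt0 : 0 ≤ (1 + t) ^ (1 - α) - 1 := by
        have : (1:ℝ) = 1 ^ (1 - α) := (Real.one_rpow _).symm
        rw [this]
        have := Real.rpow_le_rpow (by norm_num : (0:ℝ) ≤ 1) (by linarith : (1:ℝ) ≤ 1 + t)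
          (by linarith : (0:ℝ) ≤ 1 - α)
        simp only [Real.one_rpow] at this ⊢
        linarith
      have step1 : w ^ (1 - α) / Φ t * ((1 + t) ^ (1 - α) - 1)
          ≤ w ^ (1 - α) / (C₁ * t ^ (1 - α)) * t := by
        have hd : 0 < C₁ * t ^ (1 - α) := mul_pos hC₁pos (Real.rpow_pos_of_pos ht0 _)
        have l1 : w ^ (1 - α) / Φ t ≤ w ^ (1 - α) / (C₁ * t ^ (1 - α)) :=
          div_le_div_of_nonneg_left (Real.rpow_nonneg hw.le _) hd hΦtlow
        have l2 : w ^ (1 - α) / Φ t * ((1 + t) ^ (1 - α) - 1)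
            ≤ w ^ (1 - α) / (C₁ * t ^ (1 - α)) * ((1 + t) ^ (1 - α) - 1) :=
          mul_le_mul_of_nonneg_right l1 hbt0
        calc w ^ (1 - α) / Φ t * ((1 + t) ^ (1 - α) - 1)
            ≤ w ^ (1 - α) / (C₁ * t ^ (1 - α)) * ((1 + t) ^ (1 - α) - 1) := l2
          _ ≤ w ^ (1 - α) / (C₁ * t ^ (1 - α)) * t := by
              have hnn : 0 ≤ w ^ (1 - α) / (C₁ * t ^ (1 - α)) :=
                div_nonneg (Real.rpow_nonneg hw.le _) hd.le
              exact mul_le_mul_of_nonneg_left hbt hnn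
      have step2 : w ^ (1 - α) / (C₁ * t ^ (1 - α)) * t = (1 / C₁) * (w ^ (1 - α) * t ^ α) := by
        have ht' : t ^ (1 - α) ≠ 0 := (Real.rpow_pos_of_pos ht0 _).ne'
        have : t ^ α = t / t ^ (1 - α) := by
          rw [eq_div_iff ht', ← Real.rpow_add ht0]
          norm_num
        rw [this]; field_simp
      calc w ^ (1 - α) / Φ t * ((1 + t) ^ (1 - α) - 1)
          ≤ (1 / C₁) * (w ^ (1 - α) * t ^ α) := by rw [← step2]; exact step1
        _ ≤ (1 / C₁) * ε ^ m := by
            have : (0:ℝ) ≤ 1 / C₁ := by positivity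
            exact mul_le_mul_of_nonneg_left hkey this
        _ = 1 / C₁ * ε ^ m := rfl
  refine ⟨C₁, hC₁pos, 1, hkey1, hkey2, hmain, ?_⟩
  intro δ hδ
  have h1a : 0 < 1 - α := by linarith
  set m := min α (1 - α) with hm
  have hm0 : 0 < m := lt_min hα0 (by linarith)
  set A : ℝ := 2 ^ (1 - α) / Φ 1 with hA
  set B : ℝ := 1 / C₁ with hB
  have hApos : 0 < A := div_pos (Real.rpow_pos_of_pos two_pos _) hΦ1pos
  have hBpos : 0 < B := by positivity
  set ε₀ : ℝ := min ((δ / A) ^ (1 / (1 - α))) ((δ / B) ^ (1 / m)) with hε₀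
  have hε₀pos : 0 < ε₀ :=
    lt_min (Real.rpow_pos_of_pos (div_pos hδ hApos) _) (Real.rpow_pos_of_pos (div_pos hδ hBpos) _)
  refine ⟨ε₀, hε₀pos, ?_⟩
  intro ε hε hεε₀ z hz
  have pow_bound : ∀ (p c : ℝ), 0 < p → 0 < c → ε < (δ / c) ^ (1 / p) → c * ε ^ p ≤ δ := by
    intro p c hp hcp hlt
    have h1 : ε ^ p < ((δ / c) ^ (1 / p)) ^ p := Real.rpow_lt_rpow hε.le hlt hp
    have h2 : ((δ / c) ^ (1 / p)) ^ p = δ / c := by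
      rw [← Real.rpow_mul (le_of_lt (div_pos hδ hcp)), one_div_mul_cancel hp.ne',
        Real.rpow_one]
    have h3 : ε ^ p < δ / c := h2 ▸ h1
    have : c * ε ^ p < c * (δ / c) := by exact mul_lt_mul_of_pos_left h3 hcp
    rw [mul_div_cancel₀ _ hcp.ne'] at this
    exact this.le
  have hb1 : A * ε ^ (1 - α) ≤ δ :=
    pow_bound (1 - α) A h1a hApos (lt_of_lt_of_le hεε₀ (min_le_left _ _))
  have hb2 : B * ε ^ m ≤ δ :=
    pow_bound m B hm0 hBpos (lt_of_lt_of_le hεε₀ (min_le_right _ _))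
  obtain ⟨case1, case2⟩ := hmain ε hε z hz
  rcases le_or_gt (1 - z) ε with h | h
  · exact le_trans (case1 h) hb1
  · exact le_trans (case2 h) hb2
end

section
/- Let F be a distribution function on ℝ satisfying: 1-F is regularly varying at infinity with index -α, α ∈ (0,1), and there exist C > 0, ρ ∈ (0,1) such that (1 - F(yx))/(1 - F(y)) ≤ 1 + C(1-x) for all sufficiently large y and all x ∈ (ρ,1). Then for every a > 0, lim_{x→∞} x·(F(x+a) - F(x)) = 0, and moreover lim_{x→∞} x·(F(x + a·ln x) - F(x)) = 0. -/
open MeasureTheory Real Set Filter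

theorem stmt_15 (α : ℝ) (hα : α ∈ Set.Ioo (0:ℝ) 1) (F : ℝ → ℝ) (hFm : Monotone F)
    (hF1 : ∀ x, F x < 1)
    (hrv : ∀ l : ℝ, 0 < l →
      Filter.Tendsto (fun x => (1 - F (l * x)) / (1 - F x)) Filter.atTop (nhds (l ^ (-α))))
    (C ρ : ℝ) (hC : 0 < C) (hρ : ρ ∈ Set.Ioo (0:ℝ) 1)
    (hcond : ∀ᶠ y in Filter.atTop, ∀ x ∈ Set.Ioo ρ 1, (1 - F (y * x)) / (1 - F y) ≤ 1 + C * (1 - x)) :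
    ∀ a > (0:ℝ),
      Filter.Tendsto (fun x => x * (F (x + a) - F x)) Filter.atTop (nhds 0) ∧
      Filter.Tendsto (fun x => x * (F (x + a * Real.log x) - F x)) Filter.atTop (nhds 0) := by
  obtain ⟨hα0, hα1⟩ := hα
  obtain ⟨hρ0, hρ1⟩ := hρ
  set g : ℝ → ℝ := fun x => 1 - F x with hgdef
  have hgpos : ∀ x, 0 < g x := fun x => by simp only [hgdef]; linarith [hF1 x]
  have hganti : Antitone g := fun x y hxy => by simp only [hgdef]; linarith [hFm hxy]
  -- Step 1: F → 1, i.e. g → 0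
  have hbdd : BddAbove (Set.range F) := ⟨1, by rintro _ ⟨x, rfl⟩; exact (hF1 x).le⟩
  have hFL : Tendsto F atTop (nhds (⨆ x, F x)) := tendsto_atTop_ciSup hFm hbdd
  have h2α : (2:ℝ) ^ (-α) < 1 :=
    Real.rpow_lt_one_of_one_lt_of_neg one_lt_two (by linarith)
  have hL1 : (⨆ x, F x) = 1 := by
    by_contra hne
    have hLlt : (⨆ x, F x) < 1 :=
      lt_of_le_of_ne (ciSup_le fun x => (hF1 x).le) hne
    have h2x : Tendsto (fun x : ℝ => 2 * x) atTop atTop :=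
      Tendsto.const_mul_atTop two_pos tendsto_id
    have h2 : Tendsto (fun x => (1 - F (2 * x)) / (1 - F x)) atTop
        (nhds ((1 - ⨆ x, F x) / (1 - ⨆ x, F x))) :=
      (tendsto_const_nhds.sub (hFL.comp h2x)).div (tendsto_const_nhds.sub hFL)
        (by linarith)
    have huniq := tendsto_nhds_unique h2 (hrv 2 two_pos)
    rw [div_self (by linarith)] at huniq
    linarith
  have hg0 : Tendsto g atTop (nhds 0) := by
    have : Tendsto (fun x => (1:ℝ) - F x) atTop (nhds (1 - ⨆ x, F x)) := tendsto_const_nhds.sub hFL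
    rw [hL1, sub_self] at this
    exact this
  -- Step 2: log x * g x → 0
  have hloggg : Tendsto (fun x => Real.log x * g x) atTop (nhds 0) := by
    set r : ℝ := (2:ℝ) ^ (-α) with hrdef
    have hr0 : 0 < r := Real.rpow_pos_of_pos two_pos _
    set s : ℝ := (1 + r) / 2 with hsdef
    have hrs : r < s := by rw [hsdef]; linarith
    have hs1 : s < 1 := by rw [hsdef]; linarith
    have hs0 : 0 < s := by rw [hsdef]; linarith
    obtain ⟨x₁, hx₁⟩ := eventually_atTop.mp ((hrv 2 two_pos).eventually_lt_const hrs)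
    set x₀ : ℝ := max x₁ 2 with hx₀def
    have hx₀1 : (1:ℝ) < x₀ := lt_of_lt_of_le one_lt_two (le_max_right _ _)
    have hx₀0 : (0:ℝ) < x₀ := by linarith
    have hstep : ∀ x, x₀ ≤ x → g (2 * x) ≤ s * g x := by
      intro x hx
      have h := hx₁ x (le_trans (le_max_left _ _) hx)
      have hgx := hgpos x
      have : g (2 * x) / g x < s := h
      exact le_of_lt ((div_lt_iff₀ hgx).mp this)
    have hiter : ∀ n : ℕ, g (2 ^ n * x₀) ≤ s ^ n * g x₀ := by
      intro n
      induction n with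
      | zero => simp
      | succ n ih =>
        have hx : x₀ ≤ 2 ^ n * x₀ :=
          le_mul_of_one_le_left hx₀0.le (one_le_pow₀ one_le_two)
        have h1 : g (2 ^ (n + 1) * x₀) ≤ s * g (2 ^ n * x₀) := by
          have := hstep (2 ^ n * x₀) hx
          have heq : 2 * (2 ^ n * x₀) = 2 ^ (n + 1) * x₀ := by ring
          rwa [heq] at this
        calc g (2 ^ (n + 1) * x₀) ≤ s * g (2 ^ n * x₀) := h1
          _ ≤ s * (s ^ n * g x₀) := mul_le_mul_of_nonneg_left ih hs0.le
          _ = s ^ (n + 1) * g x₀ := by ring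
    set u : ℕ → ℝ := fun n => (((n:ℝ)) + 1) * Real.log 2 + Real.log x₀ with hudef
    have hu : Tendsto (fun n => u n * (s ^ n * g x₀)) atTop (nhds 0) := by
      have h1 : Tendsto (fun n : ℕ => (n:ℝ) * s ^ n) atTop (nhds 0) := by
        simpa using tendsto_pow_const_mul_const_pow_of_lt_one 1 hs0.le hs1
      have h2 : Tendsto (fun n : ℕ => s ^ n) atTop (nhds 0) :=
        tendsto_pow_atTop_nhds_zero_of_lt_one hs0.le hs1
      have h3 : Tendsto (fun n : ℕ =>
          (Real.log 2 * g x₀) * ((n:ℝ) * s ^ n) +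
            ((Real.log 2 + Real.log x₀) * g x₀) * s ^ n) atTop
          (nhds ((Real.log 2 * g x₀) * 0 + ((Real.log 2 + Real.log x₀) * g x₀) * 0)) :=
        (h1.const_mul _).add (h2.const_mul _)
      simp only [mul_zero, add_zero] at h3
      refine h3.congr fun n => ?_
      simp only [hudef]; ring
    have hnx : Tendsto (fun x : ℝ => ⌊Real.logb 2 (x / x₀)⌋₊) atTop atTop :=
      tendsto_nat_floor_atTop.comp
        ((Real.tendsto_logb_atTop one_lt_two).comp
          (Tendsto.atTop_div_const hx₀0 tendsto_id))
    have hub : Tendsto (fun x : ℝ =>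
        u ⌊Real.logb 2 (x / x₀)⌋₊ * (s ^ ⌊Real.logb 2 (x / x₀)⌋₊ * g x₀)) atTop (nhds 0) :=
      hu.comp hnx
    refine squeeze_zero' ?_ ?_ hub
    · filter_upwards [eventually_ge_atTop (1:ℝ)] with x hx
      exact mul_nonneg (Real.log_nonneg hx) (hgpos x).le
    · filter_upwards [eventually_ge_atTop x₀] with x hx
      set n := ⌊Real.logb 2 (x / x₀)⌋₊ with hndef
      have hx0 : (0:ℝ) < x := lt_of_lt_of_le hx₀0 hx
      have hxx0 : 1 ≤ x / x₀ := (one_le_div hx₀0).2 hx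
      have hlb0 : 0 ≤ Real.logb 2 (x / x₀) := Real.logb_nonneg one_lt_two hxx0
      have h2n : (2:ℝ) ^ n ≤ x / x₀ := by
        have hfl : (n:ℝ) ≤ Real.logb 2 (x / x₀) := Nat.floor_le hlb0
        calc (2:ℝ) ^ n = (2:ℝ) ^ (n:ℝ) := (Real.rpow_natCast 2 n).symm
          _ ≤ (2:ℝ) ^ (Real.logb 2 (x / x₀)) :=
            Real.rpow_le_rpow_of_exponent_le one_le_two hfl
          _ = x / x₀ := Real.rpow_logb two_pos (by norm_num) (by positivity)
      have hxlt : x < 2 ^ (n + 1) * x₀ := by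
        have hfl : Real.logb 2 (x / x₀) < (n:ℝ) + 1 := by
          have := Nat.lt_floor_add_one (Real.logb 2 (x / x₀))
          push_cast at this ⊢
          exact this
        have h1 : x / x₀ < (2:ℝ) ^ ((n:ℝ) + 1) := by
          calc x / x₀ = (2:ℝ) ^ (Real.logb 2 (x / x₀)) :=
              (Real.rpow_logb two_pos (by norm_num) (by positivity)).symm
            _ < (2:ℝ) ^ ((n:ℝ) + 1) :=
              Real.rpow_lt_rpow_of_exponent_lt one_lt_two hfl
        have h2 : (2:ℝ) ^ ((n:ℝ) + 1) = (2:ℝ) ^ (n + 1) := by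
          rw [show ((n:ℝ) + 1) = ((n + 1 : ℕ) : ℝ) by push_cast; ring,
            Real.rpow_natCast]
        rw [h2] at h1
        calc x = (x / x₀) * x₀ := by field_simp
          _ < (2:ℝ) ^ (n + 1) * x₀ := by
            exact mul_lt_mul_of_pos_right h1 hx₀0
      have hgb : g x ≤ s ^ n * g x₀ := by
        have h1 : (2:ℝ) ^ n * x₀ ≤ x := (le_div_iff₀ hx₀0).mp h2n
        exact le_trans (hganti h1) (hiter n)
      have hlogx : Real.log x ≤ u n := by
        have h1 : Real.log x ≤ Real.log ((2:ℝ) ^ (n + 1) * x₀) :=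
          Real.log_le_log hx0 hxlt.le
        rw [Real.log_mul (by positivity) (ne_of_gt hx₀0), Real.log_pow] at h1
        simp only [hudef]
        push_cast at h1 ⊢
        linarith
      have hun : 0 ≤ u n := le_trans (Real.log_nonneg (by linarith)) hlogx
      calc Real.log x * g x ≤ u n * g x := by
            rcases le_or_gt (Real.log x) 0 with h | h
            · nlinarith [hgpos x, hun]
            · exact mul_le_mul_of_nonneg_right hlogx (hgpos x).le
        _ ≤ u n * (s ^ n * g x₀) := mul_le_mul_of_nonneg_left hgb hun
  -- Step 3: key bound
  have key : ∀ b : ℝ → ℝ, (∀ᶠ x in atTop, 0 < b x) →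
      Tendsto (fun x => b x / x) atTop (nhds 0) →
      Tendsto (fun x => x + b x) atTop atTop →
      ∀ᶠ x in atTop,
        0 ≤ x * (F (x + b x) - F x) ∧ x * (F (x + b x) - F x) ≤ C * b x * g x := by
    intro b hb hbo hbt
    have hratio : Tendsto (fun x => x / (x + b x)) atTop (nhds 1) := by
      have h1 : Tendsto (fun x => 1 / (1 + b x / x)) atTop (nhds (1 / (1 + 0))) :=
        tendsto_const_nhds.div (tendsto_const_nhds.add hbo) (by norm_num)
      rw [show (1:ℝ) / (1 + 0) = 1 by norm_num] at h1
      refine h1.congr' ?_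
      filter_upwards [eventually_gt_atTop (0:ℝ)] with x hx
      rw [show 1 + b x / x = (x + b x) / x by field_simp, one_div_div]
    have hev1 : ∀ᶠ x in atTop, ρ < x / (x + b x) :=
      hratio.eventually (eventually_gt_nhds hρ1)
    have hev2 : ∀ᶠ x in atTop,
        ∀ z ∈ Set.Ioo ρ 1, (1 - F ((x + b x) * z)) / (1 - F (x + b x)) ≤ 1 + C * (1 - z) :=
      hbt.eventually hcond
    filter_upwards [hev1, hev2, hb, eventually_ge_atTop (1:ℝ)] with x h1 h2 hbx hx1
    have hx0 : (0:ℝ) < x := lt_of_lt_of_le one_pos hx1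
    have hxb : (0:ℝ) < x + b x := by linarith
    have hz1 : x / (x + b x) < 1 := (div_lt_one hxb).2 (by linarith)
    have happ := h2 (x / (x + b x)) ⟨h1, hz1⟩
    rw [show (x + b x) * (x / (x + b x)) = x by field_simp] at happ
    have hgb : 0 < g (x + b x) := hgpos _
    have hgx : g x = 1 - F x := rfl
    have hgxb : g (x + b x) = 1 - F (x + b x) := rfl
    have h5 : g x ≤ (1 + C * (1 - x / (x + b x))) * g (x + b x) := by
      rw [hgx, hgxb]
      rw [div_le_iff₀ (by rw [← hgxb]; exact hgb)] at happ
      linarith [happ]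
    have hm : g (x + b x) ≤ g x := hganti (by linarith)
    have hw : 0 ≤ C * (1 - x / (x + b x)) := mul_nonneg hC.le (by linarith)
    have hdiff : F (x + b x) - F x = g x - g (x + b x) := by rw [hgx, hgxb]; ring
    have h6 : F (x + b x) - F x ≤ C * (1 - x / (x + b x)) * g x := by
      rw [hdiff]
      nlinarith [h5, hm, hw, hgb]
    have h7 : 1 - x / (x + b x) = b x / (x + b x) := by field_simp; ring
    constructor
    · exact mul_nonneg hx0.le (sub_nonneg.2 (hFm (by linarith)))
    · rw [h7] at h6
      calc x * (F (x + b x) - F x) ≤ x * (C * (b x / (x + b x)) * g x) :=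
            mul_le_mul_of_nonneg_left h6 hx0.le
        _ = (C * b x * g x) * (x / (x + b x)) := by
            field_simp
        _ ≤ (C * b x * g x) * 1 :=
            mul_le_mul_of_nonneg_left hz1.le
              (mul_nonneg (mul_nonneg hC.le hbx.le) (hgpos x).le)
        _ = C * b x * g x := mul_one _
  intro a ha
  constructor
  · -- Part 1: b x = a
    have hb : ∀ᶠ x : ℝ in atTop, 0 < (fun _ : ℝ => a) x := Eventually.of_forall fun _ => ha
    have hbo : Tendsto (fun x : ℝ => a / x) atTop (nhds 0) := by
      have : Tendsto (fun x : ℝ => a * x⁻¹) atTop (nhds (a * 0)) := tendsto_inv_atTop_zero.const_mul a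
      simp only [mul_zero] at this
      refine this.congr fun x => ?_
      rw [div_eq_mul_inv]
    have hbt : Tendsto (fun x : ℝ => x + a) atTop atTop :=
      tendsto_atTop_add_const_right _ a tendsto_id
    have hk := key (fun _ => a) hb hbo hbt
    have hbound : Tendsto (fun x => C * a * g x) atTop (nhds 0) := by
      have := hg0.const_mul (C * a)
      simpa using this
    refine squeeze_zero' ?_ ?_ hbound
    · filter_upwards [hk] with x hx using hx.1
    · filter_upwards [hk] with x hx using hx.2
  · -- Part 2: b x = a * log x
    have hb : ∀ᶠ x : ℝ in atTop, 0 < a * Real.log x := by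
      filter_upwards [eventually_gt_atTop (1:ℝ)] with x hx
      exact mul_pos ha (Real.log_pos hx)
    have hlogdiv : Tendsto (fun x : ℝ => Real.log x / x) atTop (nhds 0) := by
      have := Real.isLittleO_log_id_atTop.tendsto_div_nhds_zero
      simpa using this
    have hbo : Tendsto (fun x : ℝ => a * Real.log x / x) atTop (nhds 0) := by
      have := hlogdiv.const_mul a
      simp only [mul_zero] at this
      refine this.congr fun x => ?_
      ring
    have hbt : Tendsto (fun x : ℝ => x + a * Real.log x) atTop atTop := by
      refine tendsto_atTop_mono' atTop ?_ tendsto_id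
      filter_upwards [eventually_ge_atTop (1:ℝ)] with x hx
      have : 0 ≤ a * Real.log x := mul_nonneg ha.le (Real.log_nonneg hx)
      simp only [id]
      linarith
    have hk := key (fun x => a * Real.log x) hb hbo hbt
    have hbound : Tendsto (fun x => (C * a) * (Real.log x * g x)) atTop (nhds 0) := by
      have := hloggg.const_mul (C * a)
      simpa using this
    refine squeeze_zero' ?_ ?_ hbound
    · filter_upwards [hk] with x hx using hx.1
    · filter_upwards [hk] with x hx
      calc x * (F (x + a * Real.log x) - F x) ≤ C * (a * Real.log x) * g x := hx.2
        _ = (C * a) * (Real.log x * g x) := by ring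
end

section
/- Let F be a distribution function with 1-F regularly varying at infinity with index -α ∈ (-1,0), and suppose for all sufficiently large z and x ∈ [1-η,1] (for some η ∈ (0,1) small): (F(z) - F(zx))/(1 - F(z)) ≤ C(1-x). Then for any ε ∈ (0, min(α,1-α)), lim_{η→0} lim_{A→∞} sup_{z>A} (1-F(z))^{-1} ∫_{(1-η,1]} (1-x)^{α-ε-1} dF_z(x) = 0, where F_z(x) = F(zx). -/
open MeasureTheory Real Set Filter

lemma aux_main (β C η z : ℝ) (hβ : 0 < β) (hβ1 : β < 1) (hC : 0 < C) (hη : 0 < η)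
    (f : StieltjesFunction ℝ) (hfz : f z < 1) (hz : 0 < z)
    (hcz : ∀ x ∈ Set.Icc (1 - η) 1, f z - f (z * x) ≤ C * (1 - x) * (1 - f z)) :
    (1 - f z)⁻¹ * ∫ u in Set.Ioc (z * (1 - η)) z, (1 - u / z) ^ (β - 1) ∂f.measure
      ≤ (2 * C * (1 - (2⁻¹:ℝ) ^ β)⁻¹) * η ^ β := by
  set D : ℝ := 1 - f z with hD
  have hD0 : 0 < D := by simp only [hD]; linarith [hfz]
  set q : ℝ := (2⁻¹:ℝ) ^ β with hq
  have hq0 : 0 < q := Real.rpow_pos_of_pos (by norm_num) _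
  have hq1 : q < 1 := Real.rpow_lt_one (by norm_num) (by norm_num) hβ
  set t : ℕ → ℝ := fun k => η * (2⁻¹:ℝ) ^ k with ht
  have ht0 : ∀ k, 0 < t k := fun k => by positivity
  have htle : ∀ k, t k ≤ η := fun k => by
    have : ((2:ℝ)⁻¹) ^ k ≤ 1 := pow_le_one₀ (by norm_num) (by norm_num)
    calc η * (2⁻¹:ℝ)^k ≤ η * 1 := by nlinarith
    _ = η := mul_one η
  have ht2 : ∀ k, t k = 2 * t (k + 1) := fun k => by
    simp only [ht, pow_succ]; ring
  set s : ℕ → Set ℝ := fun k => Set.Ioc (z * (1 - t k)) (z * (1 - t (k+1))) with hs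
  set g : ℝ → ℝ := fun u => (1 - u / z) ^ (β - 1) with hg
  have hgm : Measurable g := by simp only [hg]; fun_prop
  have hgnn : ∀ u ∈ Set.Ioc (z * (1 - η)) z, 0 ≤ g u := by
    intro u hu
    apply Real.rpow_nonneg
    have : u / z ≤ 1 := (div_le_one hz).2 hu.2
    linarith
  -- integral as lintegral
  have hint : (∫ u in Set.Ioc (z * (1 - η)) z, g u ∂f.measure)
      = (∫⁻ u in Set.Ioc (z * (1 - η)) z, ENNReal.ofReal (g u) ∂f.measure).toReal := by
    apply integral_eq_lintegral_of_nonneg_ae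
    · rw [EventuallyLE, ae_restrict_iff' measurableSet_Ioc]
      exact Eventually.of_forall hgnn
    · exact hgm.aestronglyMeasurable
  -- cover
  have hcover : Set.Ioc (z * (1 - η)) z ⊆ {z} ∪ ⋃ k, s k := by
    intro u hu
    rcases eq_or_lt_of_le hu.2 with he | hlt
    · exact Or.inl (by simp [he])
    · right
      set t' : ℝ := 1 - u / z with ht'
      have h1 : 0 < t' := by
        have : u / z < 1 := (div_lt_one hz).2 hlt
        simp only [ht']; linarith
      have h2 : t' < η := by
        have : 1 - η < u / z := (lt_div_iff₀ hz).2 (by linarith [hu.1])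
        simp only [ht']; linarith
      have hP : ∃ n : ℕ, η ≤ t' * 2 ^ n := by
        obtain ⟨n, hn⟩ := pow_unbounded_of_one_lt (R := ℝ) (η / t') one_lt_two
        exact ⟨n, by nlinarith [(div_lt_iff₀ h1).1 hn]⟩
      set n₀ := Nat.find hP with hn₀
      have hfind : η ≤ t' * 2 ^ n₀ := Nat.find_spec hP
      have hne : n₀ ≠ 0 := by
        intro h0
        rw [h0] at hfind
        simp at hfind
        linarith
      set k := n₀ - 1 with hk
      have hkn : k + 1 = n₀ := Nat.succ_pred_eq_of_pos (Nat.pos_of_ne_zero hne)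
      have hnot : t' * 2 ^ k < η := by
        have := Nat.find_min hP (m := k) (by omega)
        push_neg at this
        exact this
      refine Set.mem_iUnion.2 ⟨k, ?_, ?_⟩
      · -- z * (1 - t k) < u
        have hu' : u = z * (1 - t') := by
          simp only [ht']; field_simp; ring
        rw [hu']
        apply mul_lt_mul_of_pos_left _ hz
        have htk : t' < t k := by
          have hpk : (0:ℝ) < 2 ^ k := by positivity
          simp only [ht, inv_pow]
          rw [← div_eq_mul_inv] at *
          rw [lt_div_iff₀ hpk]
          linarith
        linarith
      · -- u ≤ z * (1 - t (k+1))
        have hu' : u = z * (1 - t') := by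
          simp only [ht']; field_simp; ring
        rw [hu']
        apply mul_le_mul_of_nonneg_left _ (le_of_lt hz)
        have htk : t (k+1) ≤ t' := by
          have hpk : (0:ℝ) < 2 ^ n₀ := by positivity
          simp only [ht, inv_pow, hkn]
          rw [← div_eq_mul_inv, div_le_iff₀ hpk]
          linarith
        linarith
  -- each shell bound
  have hshell : ∀ k, (∫⁻ u in s k, ENNReal.ofReal (g u) ∂f.measure)
      ≤ ENNReal.ofReal (2 * C * D * η ^ β * q ^ (k+1)) := by
    intro k
    have hmono : ∫⁻ u in s k, ENNReal.ofReal (g u) ∂f.measure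
        ≤ ∫⁻ _ in s k, ENNReal.ofReal ((t (k+1)) ^ (β - 1)) ∂f.measure := by
      apply setLIntegral_mono' measurableSet_Ioc
      intro u hu
      apply ENNReal.ofReal_le_ofReal
      apply Real.rpow_le_rpow_of_nonpos (ht0 (k+1)) _ (by linarith)
      have : u / z ≤ 1 - t (k+1) := (div_le_iff₀ hz).2 (by linarith [hu.2])
      linarith
    rw [setLIntegral_const] at hmono
    have hmeas : f.measure (s k) ≤ ENNReal.ofReal (C * t k * D) := by
      rw [hs, StieltjesFunction.measure_Ioc]
      apply ENNReal.ofReal_le_ofReal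
      have hmono2 : f (z * (1 - t (k+1))) ≤ f z := by
        apply f.mono
        nlinarith [ht0 (k+1)]
      have hc : f z - f (z * (1 - t k)) ≤ C * t k * D := by
        have hx : (1 - t k) ∈ Set.Icc (1 - η) 1 := by
          constructor <;> [linarith [htle k]; linarith [ht0 k]]
        have h := hcz _ hx
        have he : (1 : ℝ) - (1 - t k) = t k := by ring
        rw [he] at h
        exact h
      linarith
    calc ∫⁻ u in s k, ENNReal.ofReal (g u) ∂f.measure
        ≤ ENNReal.ofReal ((t (k+1)) ^ (β - 1)) * ENNReal.ofReal (C * t k * D) := by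
          exact hmono.trans (mul_le_mul_right hmeas _)
      _ = ENNReal.ofReal ((t (k+1)) ^ (β - 1) * (C * t k * D)) := by
          rw [← ENNReal.ofReal_mul (Real.rpow_nonneg (le_of_lt (ht0 (k+1))) _)]
      _ ≤ ENNReal.ofReal (2 * C * D * η ^ β * q ^ (k+1)) := by
          apply ENNReal.ofReal_le_ofReal
          apply le_of_eq
          have e1 : (t (k+1)) ^ (β - 1) * t (k+1) = (t (k+1)) ^ β := by
            rw [← Real.rpow_add_one (ne_of_gt (ht0 (k+1)))]
            ring_nf
          have e2 : (t (k+1)) ^ β = η ^ β * q ^ (k+1) := by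
            simp only [ht, hq]
            rw [Real.mul_rpow (le_of_lt hη) (by positivity),
              ← Real.rpow_natCast ((2:ℝ)⁻¹) (k+1), ← Real.rpow_natCast ((2⁻¹:ℝ) ^ β) (k+1),
              ← Real.rpow_mul (by norm_num), ← Real.rpow_mul (by norm_num), mul_comm β]
          rw [ht2 k]
          calc (t (k+1)) ^ (β - 1) * (C * (2 * t (k+1)) * D)
              = 2 * C * D * ((t (k+1)) ^ (β-1) * t (k+1)) := by ring
            _ = 2 * C * D * (η ^ β * q ^ (k+1)) := by rw [e1, e2]
            _ = 2 * C * D * η ^ β * q ^ (k+1) := by ring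
  -- total lintegral bound
  have hzero : (∫⁻ u in ({z} : Set ℝ), ENNReal.ofReal (g u) ∂f.measure) = 0 := by
    rw [lintegral_singleton]
    have : g z = 0 := by
      simp only [hg, div_self (ne_of_gt hz), sub_self]
      exact Real.zero_rpow (by linarith)
    rw [this]
    simp
  have hsum : (∫⁻ u in Set.Ioc (z * (1 - η)) z, ENNReal.ofReal (g u) ∂f.measure)
      ≤ ENNReal.ofReal (2 * C * D * η ^ β * (1 - q)⁻¹) := by
    calc ∫⁻ u in Set.Ioc (z * (1 - η)) z, ENNReal.ofReal (g u) ∂f.measure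
        ≤ ∫⁻ u in ({z} ∪ ⋃ k, s k : Set ℝ), ENNReal.ofReal (g u) ∂f.measure :=
          lintegral_mono_set hcover
      _ ≤ (∫⁻ u in ({z} : Set ℝ), ENNReal.ofReal (g u) ∂f.measure)
          + ∫⁻ u in (⋃ k, s k), ENNReal.ofReal (g u) ∂f.measure := lintegral_union_le _ _ _
      _ = ∫⁻ u in (⋃ k, s k), ENNReal.ofReal (g u) ∂f.measure := by rw [hzero, zero_add]
      _ ≤ ∑' k, ∫⁻ u in s k, ENNReal.ofReal (g u) ∂f.measure := lintegral_iUnion_le _ _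
      _ ≤ ∑' k, ENNReal.ofReal (2 * C * D * η ^ β * q ^ (k+1)) := ENNReal.tsum_le_tsum hshell
      _ = ENNReal.ofReal (2 * C * D * η ^ β) * ∑' (k : ℕ), (ENNReal.ofReal q) ^ (k+1) := by
          rw [← ENNReal.tsum_mul_left]
          apply tsum_congr
          intro k
          rw [← ENNReal.ofReal_pow (le_of_lt hq0), ← ENNReal.ofReal_mul (by positivity)]
      _ ≤ ENNReal.ofReal (2 * C * D * η ^ β) * ∑' (k : ℕ), (ENNReal.ofReal q) ^ k := by
          apply mul_le_mul_right
          apply ENNReal.tsum_le_tsum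
          intro k
          apply pow_le_pow_of_le_one zero_le _ (Nat.le_succ k)
          exact ENNReal.ofReal_le_one.2 (le_of_lt hq1)
      _ = ENNReal.ofReal (2 * C * D * η ^ β) * (1 - ENNReal.ofReal q)⁻¹ := by
          rw [ENNReal.tsum_geometric]
      _ = ENNReal.ofReal (2 * C * D * η ^ β) * (ENNReal.ofReal (1 - q))⁻¹ := by
          rw [← ENNReal.ofReal_one, ← ENNReal.ofReal_sub _ (le_of_lt hq0)]
      _ = ENNReal.ofReal (2 * C * D * η ^ β * (1 - q)⁻¹) := by
          have h1 : (0:ℝ) ≤ 2 * C * D * η ^ β :=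
            mul_nonneg (mul_nonneg (mul_nonneg (by norm_num) (le_of_lt hC)) (le_of_lt hD0))
              (Real.rpow_nonneg (le_of_lt hη) β)
          rw [ENNReal.ofReal_mul h1, ENNReal.ofReal_inv_of_pos (by linarith : (0:ℝ) < 1 - q)]
  have hKnn : (0:ℝ) ≤ 2 * C * D * η ^ β * (1 - q)⁻¹ :=
    le_of_lt (mul_pos (mul_pos (mul_pos (mul_pos two_pos hC) hD0)
      (Real.rpow_pos_of_pos hη β)) (inv_pos.2 (by linarith)))
  have hle : (∫ u in Set.Ioc (z * (1 - η)) z, g u ∂f.measure)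
      ≤ 2 * C * D * η ^ β * (1 - q)⁻¹ := by
    rw [hint]
    exact ENNReal.toReal_le_of_le_ofReal hKnn hsum
  calc (1 - f z)⁻¹ * ∫ u in Set.Ioc (z * (1 - η)) z, (1 - u / z) ^ (β - 1) ∂f.measure
      ≤ D⁻¹ * (2 * C * D * η ^ β * (1 - q)⁻¹) := by
        apply mul_le_mul_of_nonneg_left _ (inv_nonneg.2 (le_of_lt hD0))
        exact hle
    _ = (2 * C * (1 - q)⁻¹) * η ^ β := by
        rw [show D⁻¹ * (2 * C * D * η ^ β * (1 - q)⁻¹)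
            = (D⁻¹ * D) * (2 * C * η ^ β * (1 - q)⁻¹) from by ring,
          inv_mul_cancel₀ (ne_of_gt hD0), one_mul]
        ring

lemma aux_nonneg_s16 (b z η : ℝ) (f : StieltjesFunction ℝ) (hfz : f z < 1) (hz : 0 < z) :
    0 ≤ (1 - f z)⁻¹ * ∫ u in Set.Ioc (z * (1 - η)) z, (1 - u / z) ^ b ∂f.measure := by
  apply mul_nonneg (inv_nonneg.2 (by linarith))
  apply setIntegral_nonneg measurableSet_Ioc
  intro u hu
  apply Real.rpow_nonneg
  have : u / z ≤ 1 := (div_le_one hz).2 hu.2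
  linarith


theorem stmt_16 (α ε : ℝ) (hα : α ∈ Set.Ioo (0:ℝ) 1) (hε : ε ∈ Set.Ioo 0 (min α (1 - α)))
    (f : StieltjesFunction ℝ) (hf1 : ∀ x, f x < 1)
    (hrv : ∀ l : ℝ, 0 < l →
      Filter.Tendsto (fun x => (1 - f (l * x)) / (1 - f x)) Filter.atTop (nhds (l ^ (-α))))
    (C η₀ : ℝ) (hC : 0 < C) (hη₀ : η₀ ∈ Set.Ioo (0:ℝ) 1)
    (hcond : ∀ᶠ z in Filter.atTop, ∀ x ∈ Set.Icc (1 - η₀) 1,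
      f z - f (z * x) ≤ C * (1 - x) * (1 - f z)) :
    Filter.Tendsto
      (fun η => Filter.limsup
        (fun z => (1 - f z)⁻¹ * ∫ u in Set.Ioc (z * (1 - η)) z, (1 - u / z) ^ (α - ε - 1) ∂f.measure)
        Filter.atTop)
      (nhdsWithin 0 (Set.Ioi 0)) (nhds 0) := by
  set β : ℝ := α - ε with hβ
  have hβ0 : 0 < β := by
    have : ε < α := lt_of_lt_of_le hε.2 (min_le_left _ _)
    simp only [hβ]; linarith
  have hβ1 : β < 1 := by
    have := hα.2
    have := hε.1
    simp only [hβ]; linarith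
  set K : ℝ := 2 * C * (1 - (2⁻¹:ℝ) ^ β)⁻¹ with hK
  have hmem : Set.Ioo (0:ℝ) η₀ ∈ nhdsWithin (0:ℝ) (Set.Ioi 0) :=
    Ioo_mem_nhdsGT_of_mem ⟨le_refl 0, hη₀.1⟩
  have hbound : ∀ η ∈ Set.Ioo (0:ℝ) η₀,
      (∀ᶠ z in Filter.atTop, (1 - f z)⁻¹ *
        ∫ u in Set.Ioc (z * (1 - η)) z, (1 - u / z) ^ (β - 1) ∂f.measure ≤ K * η ^ β) := by
    intro η hη
    filter_upwards [hcond, eventually_gt_atTop (0:ℝ)] with z hz1 hz2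
    have : (2 * C * (1 - (2⁻¹:ℝ) ^ β)⁻¹) * η ^ β = K * η ^ β := by rw [hK]
    rw [← this]
    apply aux_main β C η z hβ0 hβ1 hC hη.1 f (hf1 z) hz2
    intro x hx
    exact hz1 x ⟨by linarith [hx.1, hη.2], hx.2⟩
  apply tendsto_of_tendsto_of_tendsto_of_le_of_le' (g := fun _ : ℝ => (0:ℝ))
    (h := fun η : ℝ => K * η ^ β)
  · exact tendsto_const_nhds
  · have hc : Tendsto (fun η : ℝ => η ^ β) (nhds 0) (nhds ((0:ℝ) ^ β)) :=
      (Real.continuousAt_rpow_const 0 β (Or.inr (le_of_lt hβ0))).tendsto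
    rw [Real.zero_rpow (ne_of_gt hβ0)] at hc
    have h2 := (hc.const_mul K).mono_left (nhdsWithin_le_nhds (s := Set.Ioi (0:ℝ)))
    simpa using h2
  · filter_upwards [hmem] with η hη
    have hnn : ∀ᶠ z in Filter.atTop, 0 ≤ (1 - f z)⁻¹ *
        ∫ u in Set.Ioc (z * (1 - η)) z, (1 - u / z) ^ (β - 1) ∂f.measure := by
      filter_upwards [eventually_gt_atTop (0:ℝ)] with z hz
      exact aux_nonneg_s16 _ z η f (hf1 z) hz
    exact le_limsup_of_frequently_le hnn.frequently
      (isBoundedUnder_of_eventually_le (hbound η hη))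
  · filter_upwards [hmem] with η hη
    have hnn : ∀ᶠ z in Filter.atTop, 0 ≤ (1 - f z)⁻¹ *
        ∫ u in Set.Ioc (z * (1 - η)) z, (1 - u / z) ^ (β - 1) ∂f.measure := by
      filter_upwards [eventually_gt_atTop (0:ℝ)] with z hz
      exact aux_nonneg_s16 _ z η f (hf1 z) hz
    exact limsup_le_of_le (isCoboundedUnder_le_of_eventually_le _ hnn) (hbound η hη)
end
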